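/- arXiv:1404.0139 — 4 statements merged into one kernel-verified Lean document; each statement's English description precedes it below -/
import Mathlib

section
/- In the rescaled setting, let q < p with q, p ∈ I and α_{q,p} = (p−q)(1 − χ(p−q+1)/(N+1)). (1) If p−q+1 ≤ k−1 (so α_{q,p} > 0) and at time τ one has √(P²_{q,p} 𝓗_{q,p,2}) ≤ α_{q,p}/(2(2+2χ/√N)), then (1/2) d/dτ P²_{q,p} ≥ α_{q,p}/2 + α P²_{q,p} > 0. (2) If p−q+1 ≥ k (so α_{q,p} < 0) and at time τ one has √(P²_{q,p} 𝓗_{q,p,2}) ≤ −α_{q,p}/(2(2+2χ/√N)), then (1/2) d/dτ P²_{q,p} ≤ α_{q,p}/2 + α P²_{q,p}. -/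
open Filter

noncomputable section

/-- `h_N = 1/(N+1)`. -/
def hN (N : ℕ) : ℝ := 1 / (N + 1)

/-- Right-hand side of the discrete Keller–Segel particle ODE, with the convention that
the boundary terms `1/(X_1 - X_0)` and `1/(X_{N+1} - X_N)` are set to zero. -/
def ksRHS (N : ℕ) (χ : ℝ) (x : ℕ → ℝ) (i : ℕ) : ℝ :=
  (if i < N then -(1 / (x (i + 1) - x i)) else 0)
    + (if 1 < i then 1 / (x i - x (i - 1)) else 0)
    + 2 * χ * hN N * ∑ j ∈ (Finset.Icc 1 N).erase i, 1 / (x j - x i)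

/-- A solution of the discrete Keller–Segel particle system on `[0,T)`. -/
structure IsKSSol (N : ℕ) (χ T : ℝ) (X : ℕ → ℝ → ℝ) : Prop where
  ordered : ∀ t ∈ Set.Ico (0 : ℝ) T, ∀ i, 1 ≤ i → i < N → X i t < X (i + 1) t
  ode : ∀ i ∈ Finset.Icc 1 N, ∀ t ∈ Set.Ico (0 : ℝ) T,
    HasDerivAt (X i) (ksRHS N χ (fun j => X j t) i) t

/-- A solution on its maximal interval of existence `[0,T)`: it cannot be extended to a
solution on any larger interval `[0,T')`. -/
def IsMaxKSSol (N : ℕ) (χ T : ℝ) (X : ℕ → ℝ → ℝ) : Prop :=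
  IsKSSol N χ T X ∧
    ∀ T' > T, ∀ X' : ℕ → ℝ → ℝ,
      (∀ i ∈ Finset.Icc 1 N, ∀ t ∈ Set.Ico (0 : ℝ) T, X' i t = X i t) →
        ¬ IsKSSol N χ T' X'

/-- `liminf_{t → T⁻} (X_{i+1}(t) - X_i(t)) = 0`. -/
def gapLiminfZero (X : ℕ → ℝ → ℝ) (T : ℝ) (i : ℕ) : Prop :=
  Filter.liminf (fun t => X (i + 1) t - X i t) (nhdsWithin T (Set.Iio T)) = 0

/-- A nonempty set of consecutive indices in `{1,…,N}` all of whose consecutive gaps have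
liminf zero at time `T`. -/
def IsWeakCand (N : ℕ) (X : ℕ → ℝ → ℝ) (T : ℝ) (I : Finset ℕ) : Prop :=
  I.Nonempty ∧ (∃ a b, 1 ≤ a ∧ b ≤ N ∧ I = Finset.Icc a b) ∧
    ∀ i, i ∈ I → i + 1 ∈ I → gapLiminfZero X T i

/-- A weak blow-up set: maximal for inclusion among weak candidates. -/
def IsWeakBlowup (N : ℕ) (X : ℕ → ℝ → ℝ) (T : ℝ) (I : Finset ℕ) : Prop :=
  IsWeakCand N X T I ∧ ∀ J, IsWeakCand N X T J → I ⊆ J → J = I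

/-- A strong blow-up set: all consecutive gaps tend to zero, and the particles of `I` stay
uniformly away from the particles outside `I`. -/
def IsStrongBlowup (N : ℕ) (X : ℕ → ℝ → ℝ) (T : ℝ) (I : Finset ℕ) : Prop :=
  IsWeakBlowup N X T I ∧
    (∀ i, i ∈ I → i + 1 ∈ I →
      Filter.Tendsto (fun t => X (i + 1) t - X i t) (nhdsWithin T (Set.Iio T)) (nhds 0)) ∧
    ∃ c > 0, ∀ i ∈ I, ∀ j ∈ Finset.Icc 1 N, j ∉ I → ∀ t ∈ Set.Ico (0 : ℝ) T,
      1 / c ≤ |X i t - X j t|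

/-- Mean of the configuration `x` over the index set `I`. -/
def meanOn (I : Finset ℕ) (x : ℕ → ℝ) : ℝ := (∑ i ∈ I, x i) / (I.card : ℝ)

/-- Variance `Π²_I` of the configuration `x` over the index set `I`. -/
def var2 (I : Finset ℕ) (x : ℕ → ℝ) : ℝ := ∑ i ∈ I, (x i - meanOn I x) ^ 2

/-- Exterior interaction potential `H_{IO,m} = ∑_{j∈O} ∑_{i∈I} 1/(x_j - x_i)^m`,
where `O = {1,…,N} \ I`. -/
def extPot (N : ℕ) (I : Finset ℕ) (m : ℕ) (x : ℕ → ℝ) : ℝ :=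
  ∑ j ∈ (Finset.Icc 1 N) \ I, ∑ i ∈ I, 1 / (x j - x i) ^ m

lemma ksRHS_scale (N : ℕ) (χ R b : ℝ) (x : ℕ → ℝ) (i : ℕ) :
    ksRHS N χ (fun j => (x j - b) / R) i = R * ksRHS N χ x i := by
  have key : ∀ a c : ℕ, 1 / ((x a - b) / R - (x c - b) / R) = R * (1 / (x a - x c)) := by
    intro a c
    have h : (x a - b) / R - (x c - b) / R = (x a - x c) / R := by ring
    rw [h, one_div_div, div_eq_mul_one_div]
  simp only [ksRHS, key, ← Finset.mul_sum]
  split_ifs <;> ring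

lemma strictMonoOn_of_adj {N : ℕ} {f : ℕ → ℝ} (h : ∀ i, 1 ≤ i → i < N → f i < f (i + 1)) :
    ∀ i j, 1 ≤ i → i < j → j ≤ N → f i < f j := by
  intro i j hi hij hjN
  have key : ∀ m, i + 1 ≤ m → m ≤ N → f i < f m := by
    intro m hm
    induction m, hm using Nat.le_induction with
    | base => intro h1; exact h i hi (by omega)
    | succ m hm ih => intro hmN; exact lt_trans (ih (by omega)) (h m (by omega) (by omega))
  exact key j hij hjN

lemma key_est (N q p : ℕ) (χ : ℝ) (hχ0 : 0 < χ) (h1q : 1 ≤ q) (hqp : q < p) (hpN : p ≤ N)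
    (y : ℕ → ℝ) (hord : ∀ i j, 1 ≤ i → i < j → j ≤ N → y i < y j) :
    |(∑ i ∈ Finset.Icc q p, (y i - meanOn (Finset.Icc q p) y) * ksRHS N χ y i)
        - ((p : ℝ) - q) * (1 - χ * ((p : ℝ) - q + 1) / ((N : ℝ) + 1))|
      ≤ (2 + 2 * χ / Real.sqrt N)
          * Real.sqrt (var2 (Finset.Icc q p) y * extPot N (Finset.Icc q p) 2 y) := by
  set I' := Finset.Icc q p with hI'
  set O := Finset.Icc 1 N \ I' with hO
  set M := meanOn I' y with hM
  set d : ℕ → ℝ := fun i => y i - M with hd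
  have hqI : q ∈ I' := by simp [hI', Finset.mem_Icc]; omega
  have hpI : p ∈ I' := by simp [hI', Finset.mem_Icc]; omega
  have hIsub : I' ⊆ Finset.Icc 1 N := by
    intro x hx; simp [hI', Finset.mem_Icc] at *; omega
  have hcard : I'.card = p - q + 1 := by rw [hI', Nat.card_Icc]; omega
  have hneyy : ∀ i j, 1 ≤ i → 1 ≤ j → i ≤ N → j ≤ N → i ≠ j → y j - y i ≠ 0 := by
    intro i j hi hj hiN hjN hne
    rcases Nat.lt_or_ge i j with h | h
    · exact sub_ne_zero.mpr (ne_of_gt (hord i j hi h hjN))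
    · exact sub_ne_zero.mpr (ne_of_lt (hord j i hj (by omega) hiN))
  -- decompose S
  set S := ∑ i ∈ I', d i * ksRHS N χ y i with hS
  set T1 := ∑ i ∈ I', d i * (if i < N then -(1 / (y (i + 1) - y i)) else 0) with hT1
  set T2 := ∑ i ∈ I', d i * (if 1 < i then 1 / (y i - y (i - 1)) else 0) with hT2
  set Sint := ∑ i ∈ I', ∑ j ∈ I'.erase i, d i * (1 / (y j - y i)) with hSint
  set Sext := ∑ i ∈ I', ∑ j ∈ O, d i * (1 / (y j - y i)) with hSext
  have hdecomp : S = T1 + T2 + 2 * χ * hN N * Sint + 2 * χ * hN N * Sext := by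
    rw [hS, hT1, hT2, hSint, hSext, Finset.mul_sum, Finset.mul_sum,
      ← Finset.sum_add_distrib, ← Finset.sum_add_distrib, ← Finset.sum_add_distrib]
    apply Finset.sum_congr rfl
    intro i hi
    have hu : (Finset.Icc 1 N).erase i = (I'.erase i) ∪ O := by
      have hiqp := Finset.mem_Icc.mp (hI' ▸ hi)
      ext x
      simp only [Finset.mem_erase, Finset.mem_union, hO, Finset.mem_sdiff, hI', Finset.mem_Icc]
      omega
    have hdisj : Disjoint (I'.erase i) O := by
      rw [Finset.disjoint_left]
      intro a ha hab
      rw [hO, Finset.mem_sdiff] at hab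
      exact hab.2 (Finset.mem_of_mem_erase ha)
    rw [ksRHS, hu, Finset.sum_union hdisj, ← Finset.mul_sum, ← Finset.mul_sum]
    ring
  -- nearest-neighbor part
  set EA := d p * (if p < N then -(1 / (y (p + 1) - y p)) else 0) with hEA
  set EB := d q * (if 1 < q then 1 / (y q - y (q - 1)) else 0) with hEB
  have hT12 : T1 + T2 = ((p : ℝ) - q) + EA + EB := by
    have hins_top : Finset.Icc q p = insert p (Finset.Icc q (p - 1)) := by
      ext x; simp only [Finset.mem_Icc, Finset.mem_insert]; omega
    have hptop : p ∉ Finset.Icc q (p - 1) := by simp only [Finset.mem_Icc]; omega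
    have hins_bot : Finset.Icc q p = insert q (Finset.Icc (q + 1) p) := by
      ext x; simp only [Finset.mem_Icc, Finset.mem_insert]; omega
    have hqbot : q ∉ Finset.Icc (q + 1) p := by simp only [Finset.mem_Icc]; omega
    have e1 : T1 = EA + ∑ i ∈ Finset.Icc q (p - 1), d i * (-(1 / (y (i + 1) - y i))) := by
      rw [hT1, hI']
      conv_lhs => rw [hins_top]
      rw [Finset.sum_insert hptop, hEA]
      congr 1
      apply Finset.sum_congr rfl
      intro i hi
      simp only [Finset.mem_Icc] at hi
      rw [if_pos (by omega : i < N)]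
    have e2 : T2 = EB + ∑ i ∈ Finset.Icc q (p - 1), d (i + 1) * (1 / (y (i + 1) - y i)) := by
      rw [hT2, hI']
      conv_lhs => rw [hins_bot]
      rw [Finset.sum_insert hqbot, hEB]
      congr 1
      have hp1 : p - 1 + 1 = p := by omega
      rw [← hp1, ← Finset.map_add_right_Icc, Finset.sum_map]
      apply Finset.sum_congr rfl
      intro i hi
      simp only [Finset.mem_Icc] at hi
      have : addRightEmbedding 1 i = i + 1 := rfl
      rw [this, if_pos (by omega : 1 < i + 1)]
      simp
    have e3 : ∑ i ∈ Finset.Icc q (p - 1),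
        (d i * (-(1 / (y (i + 1) - y i))) + d (i + 1) * (1 / (y (i + 1) - y i)))
        = ((p : ℝ) - q) := by
      have hpt : ∀ i ∈ Finset.Icc q (p - 1),
          d i * (-(1 / (y (i + 1) - y i))) + d (i + 1) * (1 / (y (i + 1) - y i)) = 1 := by
        intro i hi
        simp only [Finset.mem_Icc] at hi
        have hne' : y (i + 1) - y i ≠ 0 :=
          sub_ne_zero.mpr (ne_of_gt (hord i (i + 1) (by omega) (by omega) (by omega)))
        simp only [hd]
        field_simp
        ring
      rw [Finset.sum_congr rfl hpt, Finset.sum_const, nsmul_eq_mul, mul_one, Nat.card_Icc]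
      have h9 : p - 1 + 1 - q = p - q := by omega
      rw [h9, Nat.cast_sub (le_of_lt hqp)]
    rw [e1, e2]
    have := e3
    rw [Finset.sum_add_distrib] at this
    linarith
  -- interior interaction
  have hSintval : Sint + Sint = -((((p : ℝ) - q) + 1) * ((p : ℝ) - q)) := by
    have hswap : Sint = ∑ i ∈ I', ∑ j ∈ I'.erase i, d j * (1 / (y i - y j)) := by
      rw [hSint]
      exact Finset.sum_comm' (by
        intro a b
        simp only [Finset.mem_erase]
        constructor
        · rintro ⟨ha, hb, hbI⟩; exact ⟨⟨(Ne.symm hb), ha⟩, hbI⟩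
        · rintro ⟨⟨hab, haI⟩, hbI⟩; exact ⟨haI, Ne.symm hab, hbI⟩)
    have hcomb : Sint + Sint = ∑ i ∈ I', ∑ j ∈ I'.erase i,
        (d i * (1 / (y j - y i)) + d j * (1 / (y i - y j))) := by
      nth_rewrite 2 [hswap]
      rw [hSint, ← Finset.sum_add_distrib]
      apply Finset.sum_congr rfl
      intro i _
      rw [← Finset.sum_add_distrib]
    rw [hcomb]
    have hpt : ∀ i ∈ I', ∀ j ∈ I'.erase i,
        d i * (1 / (y j - y i)) + d j * (1 / (y i - y j)) = -1 := by
      intro i hi j hj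
      rw [Finset.mem_erase] at hj
      have hiI := Finset.mem_Icc.mp (hI' ▸ hi)
      have hjI := Finset.mem_Icc.mp (hI' ▸ hj.2)
      have hne1 : y j - y i ≠ 0 := hneyy i j (by omega) (by omega) (by omega) (by omega) (Ne.symm hj.1)
      have hne2 : y i - y j ≠ 0 := hneyy j i (by omega) (by omega) (by omega) (by omega) hj.1
      simp only [hd]
      field_simp
      ring
    calc ∑ i ∈ I', ∑ j ∈ I'.erase i, (d i * (1 / (y j - y i)) + d j * (1 / (y i - y j)))
        = ∑ i ∈ I', ∑ _j ∈ I'.erase i, (-1 : ℝ) := by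
          apply Finset.sum_congr rfl; intro i hi
          exact Finset.sum_congr rfl (hpt i hi)
      _ = ∑ i ∈ I', -(((p : ℝ) - q)) := by
          apply Finset.sum_congr rfl; intro i hi
          rw [Finset.sum_const, nsmul_eq_mul, Finset.card_erase_of_mem hi, hcard]
          have : p - q + 1 - 1 = p - q := by omega
          rw [this, Nat.cast_sub (le_of_lt hqp)]
          ring
      _ = -((((p : ℝ) - q) + 1) * ((p : ℝ) - q)) := by
          rw [Finset.sum_const, nsmul_eq_mul, hcard]
          have : ((p - q + 1 : ℕ) : ℝ) = (p : ℝ) - q + 1 := by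
            rw [Nat.cast_add, Nat.cast_sub (le_of_lt hqp)]; norm_num
          rw [this]; ring
  -- nonnegativity and single-term bounds
  set Q := Real.sqrt (var2 I' y * extPot N I' 2 y) with hQ
  have hvar2 : var2 I' y = ∑ i ∈ I', d i ^ 2 := by
    simp only [var2, hd, hM]
  have hP2nn : 0 ≤ var2 I' y := by
    rw [hvar2]; exact Finset.sum_nonneg fun i _ => sq_nonneg _
  have hH2nn : 0 ≤ extPot N I' 2 y := by
    apply Finset.sum_nonneg; intro j _; apply Finset.sum_nonneg; intro i _; positivity
  have hQ0 : 0 ≤ Q := Real.sqrt_nonneg _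
  have hflip : ∀ a b : ℝ, (1 / (a - b)) ^ 2 = (1 / (b - a)) ^ 2 := by
    intro a b
    rw [div_pow, div_pow, one_pow, show (a - b) ^ 2 = (b - a) ^ 2 from by ring]
  have hdsq : ∀ s ∈ I', d s ^ 2 ≤ var2 I' y := by
    intro s hs; rw [hvar2]
    exact Finset.single_le_sum (fun i _ => sq_nonneg (d i)) hs
  have hsq2 : ∀ j ∈ O, ∀ i ∈ I', (1 / (y j - y i)) ^ 2 ≤ extPot N I' 2 y := by
    intro j hj i hi
    have h1 : (1 / (y j - y i)) ^ 2 = 1 / (y j - y i) ^ 2 := by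
      rw [div_pow, one_pow]
    rw [h1]
    calc 1 / (y j - y i) ^ 2 ≤ ∑ i' ∈ I', 1 / (y j - y i') ^ 2 :=
          Finset.single_le_sum (f := fun i' => 1 / (y j - y i') ^ 2)
            (fun i' _ => by positivity) hi
      _ ≤ extPot N I' 2 y := by
          unfold extPot
          exact Finset.single_le_sum (f := fun j' => ∑ i' ∈ I', 1 / (y j' - y i') ^ 2)
            (fun j' _ => Finset.sum_nonneg fun i' _ => by positivity) (hO ▸ hj)
  have hterm : ∀ j ∈ O, ∀ i ∈ I', ∀ u : ℝ, (u = 1 / (y j - y i) ∨ u = 1 / (y i - y j)) →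
      |d i * u| ≤ Q := by
    intro j hj i hi u hu
    have h1 : |d i| ≤ Real.sqrt (var2 I' y) := by
      rw [← Real.sqrt_sq_eq_abs]; exact Real.sqrt_le_sqrt (hdsq i hi)
    have h2 : |u| ≤ Real.sqrt (extPot N I' 2 y) := by
      rw [← Real.sqrt_sq_eq_abs]
      apply Real.sqrt_le_sqrt
      rcases hu with h | h <;> rw [h]
      · exact hsq2 j hj i hi
      · rw [hflip]; exact hsq2 j hj i hi
    calc |d i * u| = |d i| * |u| := abs_mul _ _
      _ ≤ Real.sqrt (var2 I' y) * Real.sqrt (extPot N I' 2 y) :=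
          mul_le_mul h1 h2 (abs_nonneg _) (Real.sqrt_nonneg _)
      _ = Q := by rw [hQ, Real.sqrt_mul hP2nn]
  have hEAb : |EA| ≤ Q := by
    by_cases h : p < N
    · rw [hEA, if_pos h]
      have hpO : p + 1 ∈ O := by
        rw [hO, Finset.mem_sdiff, hI']
        simp only [Finset.mem_Icc]; omega
      rw [mul_neg, abs_neg]
      exact hterm (p + 1) hpO p hpI _ (Or.inl rfl)
    · rw [hEA, if_neg h]; simpa using hQ0
  have hEBb : |EB| ≤ Q := by
    by_cases h : 1 < q
    · rw [hEB, if_pos h]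
      have hqO : q - 1 ∈ O := by
        rw [hO, Finset.mem_sdiff, hI']
        simp only [Finset.mem_Icc]; omega
      exact hterm (q - 1) hqO q hqI _ (Or.inr rfl)
    · rw [hEB, if_neg h]; simpa using hQ0
  -- exterior Cauchy-Schwarz
  have hN2 : 2 ≤ N := by omega
  have hNpos : (0 : ℝ) < N := by exact_mod_cast Nat.lt_of_lt_of_le (by norm_num) hN2
  have hsNpos : 0 < Real.sqrt N := Real.sqrt_pos.mpr hNpos
  have hSextb : |Sext| ≤ Real.sqrt N * Q := by
    have hprod : Sext = ∑ z ∈ I' ×ˢ O, d z.1 * (1 / (y z.2 - y z.1)) := by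
      rw [hSext, Finset.sum_product]
    have hCS := Finset.sum_mul_sq_le_sq_mul_sq (I' ×ˢ O) (fun z => d z.1)
      (fun z => 1 / (y z.2 - y z.1))
    have hsum1 : ∑ z ∈ I' ×ˢ O, d z.1 ^ 2 = (O.card : ℝ) * var2 I' y := by
      rw [Finset.sum_product]
      simp only [Finset.sum_const, nsmul_eq_mul]
      rw [← Finset.mul_sum, hvar2]
    have hsum2 : ∑ z ∈ I' ×ˢ O, (1 / (y z.2 - y z.1)) ^ 2 = extPot N I' 2 y := by
      rw [Finset.sum_product]
      unfold extPot
      rw [← hO, Finset.sum_comm]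
      apply Finset.sum_congr rfl; intro i _
      apply Finset.sum_congr rfl; intro j _
      rw [div_pow, one_pow]
    have hOcard : (O.card : ℝ) ≤ N := by
      have h1 : O.card ≤ (Finset.Icc 1 N).card := Finset.card_le_card (hO ▸ Finset.sdiff_subset)
      rw [Nat.card_Icc] at h1
      exact_mod_cast le_trans h1 (by omega)
    have h2 : Sext ^ 2 ≤ (N : ℝ) * (var2 I' y * extPot N I' 2 y) := by
      rw [hprod]
      calc (∑ z ∈ I' ×ˢ O, d z.1 * (1 / (y z.2 - y z.1))) ^ 2
          ≤ (∑ z ∈ I' ×ˢ O, d z.1 ^ 2) * ∑ z ∈ I' ×ˢ O, (1 / (y z.2 - y z.1)) ^ 2 := hCS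
        _ = (O.card : ℝ) * (var2 I' y * extPot N I' 2 y) := by rw [hsum1, hsum2]; ring
        _ ≤ (N : ℝ) * (var2 I' y * extPot N I' 2 y) := by
            apply mul_le_mul_of_nonneg_right hOcard (mul_nonneg hP2nn hH2nn)
    calc |Sext| = Real.sqrt (Sext ^ 2) := (Real.sqrt_sq_eq_abs _).symm
      _ ≤ Real.sqrt ((N : ℝ) * (var2 I' y * extPot N I' 2 y)) := Real.sqrt_le_sqrt h2
      _ = Real.sqrt N * Q := by rw [Real.sqrt_mul hNpos.le, hQ]
  -- assembly
  have hgoal : (∑ i ∈ I', (y i - M) * ksRHS N χ y i) = S := by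
    rw [hS]
  have hSintv : Sint = -((((p : ℝ) - q) + 1) * ((p : ℝ) - q)) / 2 := by linarith
  have hN1 : ((N : ℝ) + 1) ≠ 0 := by positivity
  have hSA : S - ((p : ℝ) - q) * (1 - χ * ((p : ℝ) - q + 1) / ((N : ℝ) + 1))
      = EA + EB + 2 * χ * hN N * Sext := by
    rw [hdecomp, hT12, hSintv]
    simp only [hN]
    field_simp
    ring
  have hcoef : 0 ≤ 2 * χ * hN N := by
    simp only [hN]; positivity
  have hfin : 2 * χ * hN N * Real.sqrt N ≤ 2 * χ / Real.sqrt N := by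
    rw [le_div_iff₀ hsNpos, mul_assoc (2 * χ * hN N), Real.mul_self_sqrt hNpos.le]
    simp only [hN]
    have h6 : 2 * χ * (1 / ((N : ℝ) + 1)) * N = 2 * χ * N / ((N : ℝ) + 1) := by ring
    rw [h6, div_le_iff₀ (by positivity : (0:ℝ) < (N:ℝ) + 1)]
    have h7 : 2 * χ * ((N : ℝ) + 1) - 2 * χ * N = 2 * χ := by ring
    linarith only [hχ0, h7]
  rw [hSA]
  calc |EA + EB + 2 * χ * hN N * Sext| ≤ |EA| + |EB| + |2 * χ * hN N * Sext| :=
        abs_add_three _ _ _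
    _ ≤ Q + Q + 2 * χ * hN N * (Real.sqrt N * Q) := by
        have h3 : |2 * χ * hN N * Sext| = 2 * χ * hN N * |Sext| := by
          rw [abs_mul, abs_of_nonneg hcoef]
        rw [h3]
        have := mul_le_mul_of_nonneg_left hSextb hcoef
        linarith
    _ ≤ (2 + 2 * χ / Real.sqrt N) * Q := by
        have h4 : 2 * χ * hN N * (Real.sqrt N * Q) = (2 * χ * hN N * Real.sqrt N) * Q := by ring
        have h5 := mul_le_mul_of_nonneg_right hfin hQ0
        rw [h4]
        linarith

set_option maxHeartbeats 1000000 in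
/-- in the rescaled setting, with `α_{q,p} = (p-q)(1 - χ(p-q+1)/(N+1))`:
(1) if `p-q+1 ≤ k-1` and `√(P²_{q,p} 𝓗_{q,p,2}) ≤ α_{q,p}/(2(2+2χ/√N))` then
`(1/2) d/dτ P²_{q,p} ≥ α_{q,p}/2 + α P²_{q,p} > 0`;
(2) if `p-q+1 ≥ k` and `√(P²_{q,p} 𝓗_{q,p,2}) ≤ -α_{q,p}/(2(2+2χ/√N))` then
`(1/2) d/dτ P²_{q,p} ≤ α_{q,p}/2 + α P²_{q,p}`. -/
theorem stmt9 (N k : ℕ) (hN2 : 2 ≤ N) (hk : 2 ≤ k) (hkN : k ≤ N)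
    (χ T : ℝ) (hχ1 : ((N : ℝ) + 1) / k < χ) (hχ2 : χ < ((N : ℝ) + 1) / ((k : ℝ) - 1))
    (hT : 0 < T)
    (X : ℕ → ℝ → ℝ) (hX : IsKSSol N χ T X)
    (l : ℕ) (hl : 1 ≤ l) (hlk : l + k - 1 ≤ N)
    (hI : IsWeakBlowup N X T (Finset.Icc l (l + k - 1)))
    (α : ℝ) (hα : α = ((k : ℝ) - 1) * (χ * k / ((N : ℝ) + 1) - 1))
    (Xbar : ℝ)
    (hXbar : Filter.Tendsto (fun t => (∑ i ∈ Finset.Icc l (l + k - 1), X i t) / (k : ℝ))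
      (nhdsWithin T (Set.Iio T)) (nhds Xbar))
    (Y : ℕ → ℝ → ℝ)
    (hY : ∀ i τ, Y i τ =
      (X i (T * (1 - Real.exp (-2 * α * τ))) - Xbar) /
        (Real.sqrt (2 * α * T) * Real.exp (-α * τ)))
    (q p : ℕ) (hq : q ∈ Finset.Icc l (l + k - 1)) (hp : p ∈ Finset.Icc l (l + k - 1))
    (hqp : q < p) (τ : ℝ) (hτ : 0 ≤ τ) :
    ((p - q + 1 ≤ k - 1) →
      Real.sqrt (var2 (Finset.Icc q p) (fun i => Y i τ)
          * extPot N (Finset.Icc q p) 2 (fun i => Y i τ))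
        ≤ (((p : ℝ) - q) * (1 - χ * ((p : ℝ) - q + 1) / ((N : ℝ) + 1)))
            / (2 * (2 + 2 * χ / Real.sqrt N)) →
      (0 < ((p : ℝ) - q) * (1 - χ * ((p : ℝ) - q + 1) / ((N : ℝ) + 1)) / 2
          + α * var2 (Finset.Icc q p) (fun i => Y i τ) ∧
        ((p : ℝ) - q) * (1 - χ * ((p : ℝ) - q + 1) / ((N : ℝ) + 1)) / 2
            + α * var2 (Finset.Icc q p) (fun i => Y i τ)
          ≤ (1 / 2) * deriv (fun σ => var2 (Finset.Icc q p) (fun i => Y i σ)) τ)) ∧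
    ((k ≤ p - q + 1) →
      Real.sqrt (var2 (Finset.Icc q p) (fun i => Y i τ)
          * extPot N (Finset.Icc q p) 2 (fun i => Y i τ))
        ≤ -(((p : ℝ) - q) * (1 - χ * ((p : ℝ) - q + 1) / ((N : ℝ) + 1)))
            / (2 * (2 + 2 * χ / Real.sqrt N)) →
      (1 / 2) * deriv (fun σ => var2 (Finset.Icc q p) (fun i => Y i σ)) τ
        ≤ ((p : ℝ) - q) * (1 - χ * ((p : ℝ) - q + 1) / ((N : ℝ) + 1)) / 2
          + α * var2 (Finset.Icc q p) (fun i => Y i τ)) := by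
  
  have hmemq := Finset.mem_Icc.mp hq
  have hmemp := Finset.mem_Icc.mp hp
  have h1q : 1 ≤ q := le_trans hl hmemq.1
  have hpN : p ≤ N := le_trans hmemp.2 hlk
  have hkR : (0:ℝ) < (k:ℝ) := by exact_mod_cast Nat.lt_of_lt_of_le (by norm_num) hk
  have hχ0 : 0 < χ := lt_trans (by positivity) hχ1
  have hα0 : 0 < α := by
    rw [hα]
    have h1 : (0:ℝ) < (k:ℝ) - 1 := by
      have : (2:ℝ) ≤ (k:ℝ) := by exact_mod_cast hk
      linarith
    have h2 : ((N:ℝ) + 1) < χ * k := (div_lt_iff₀ hkR).mp hχ1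
    have h3 : 0 < χ * k / ((N:ℝ) + 1) - 1 := by
      rw [sub_pos, lt_div_iff₀ (by positivity : (0:ℝ) < (N:ℝ) + 1)]
      linarith
    exact mul_pos h1 h3
  set t := T * (1 - Real.exp (-2 * α * τ)) with ht
  set c := Real.sqrt (2 * α * T) with hcdef
  set R := c * Real.exp (-α * τ) with hRdef
  have hc0 : 0 < c := Real.sqrt_pos.mpr (by positivity)
  have hR0 : 0 < R := mul_pos hc0 (Real.exp_pos _)
  have hc2 : c ^ 2 = 2 * α * T := Real.sq_sqrt (by positivity)
  have htmem : t ∈ Set.Ico (0:ℝ) T := by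
    constructor
    · have h1 : Real.exp (-2 * α * τ) ≤ 1 := Real.exp_le_one_iff.mpr (by nlinarith)
      rw [ht]
      nlinarith
    · have h1 : 0 < Real.exp (-2 * α * τ) := Real.exp_pos _
      rw [ht]
      nlinarith
  have hyd : ∀ j, Y j τ = (X j t - Xbar) / R := by
    intro j; rw [hY j τ, ht, hRdef, hcdef]
  have hXord : ∀ i j, 1 ≤ i → i < j → j ≤ N → X i t < X j t :=
    strictMonoOn_of_adj (fun i h1 h2 => hX.ordered t htmem i h1 h2)
  have hYord : ∀ i j, 1 ≤ i → i < j → j ≤ N → Y i τ < Y j τ := by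
    intro i j h1 h2 h3
    rw [hyd i, hyd j]
    have h4 := hXord i j h1 h2 h3
    have h5 : X i t - Xbar < X j t - Xbar := by linarith
    gcongr
  -- derivative of each particle in rescaled variables
  have hmain : ∀ i ∈ Finset.Icc 1 N,
      HasDerivAt (fun σ => Y i σ) (ksRHS N χ (fun j => Y j τ) i + α * Y i τ) τ := by
    intro i hi
    have hXd : HasDerivAt (X i) (ksRHS N χ (fun j => X j t) i) t := hX.ode i hi t htmem
    have h1 : HasDerivAt (fun σ : ℝ => -2 * α * σ) (-2 * α) τ := by
      simpa using (hasDerivAt_id τ).const_mul (-2 * α)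
    have hφ : HasDerivAt (fun σ : ℝ => T * (1 - Real.exp (-2 * α * σ)))
        (2 * α * T * Real.exp (-2 * α * τ)) τ := by
      have h2 := (h1.exp.const_sub 1).const_mul T
      refine h2.congr_deriv ?_
      ring
    have hcomp : HasDerivAt (fun σ : ℝ => X i (T * (1 - Real.exp (-2 * α * σ))))
        (ksRHS N χ (fun j => X j t) i * (2 * α * T * Real.exp (-2 * α * τ))) τ :=
      hXd.comp τ hφ
    have hg : HasDerivAt (fun σ : ℝ => c * Real.exp (-α * σ))
        (c * (-α * Real.exp (-α * τ))) τ := by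
      have h3 : HasDerivAt (fun σ : ℝ => -α * σ) (-α) τ := by
        simpa using (hasDerivAt_id τ).const_mul (-α)
      have h4 := h3.exp.const_mul c
      refine h4.congr_deriv ?_
      ring
    have hgne : c * Real.exp (-α * τ) ≠ 0 := ne_of_gt (by positivity)
    have hdiv := (hcomp.sub_const Xbar).div hg hgne
    have hfun : (fun σ => Y i σ)
        = (fun σ => (X i (T * (1 - Real.exp (-2 * α * σ))) - Xbar) / (c * Real.exp (-α * σ))) := by
      funext σ
      rw [hY i σ, hcdef]
    rw [hfun]
    refine hdiv.congr_deriv ?_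
    have hYlam : (fun j => Y j τ) = (fun j => (X j t - Xbar) / R) := funext hyd
    rw [hYlam, ksRHS_scale, hyd i]
    rw [show T * (1 - Real.exp (-2 * α * τ)) = t from ht.symm]
    have hE : Real.exp (-2 * α * τ) = Real.exp (-α * τ) ^ 2 := by
      rw [sq, ← Real.exp_add]
      ring_nf
    rw [hE, hRdef, ← hc2]
    have hEne : Real.exp (-α * τ) ≠ 0 := Real.exp_ne_zero _
    have hcne : c ≠ 0 := ne_of_gt hc0
    field_simp
    ring
  -- derivative of the variance
  have hIsub : Finset.Icc q p ⊆ Finset.Icc 1 N := by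
    intro x hx
    simp only [Finset.mem_Icc] at *
    omega
  set G : ℕ → ℝ := fun i => ksRHS N χ (fun j => Y j τ) i + α * Y i τ with hGdef
  have hmainG : ∀ i ∈ Finset.Icc q p, HasDerivAt (fun σ => Y i σ) (G i) τ :=
    fun i hi => hmain i (hIsub hi)
  set Gbar := (∑ i ∈ Finset.Icc q p, G i) / ((Finset.Icc q p).card : ℝ) with hGbardef
  have hmean : HasDerivAt (fun σ => meanOn (Finset.Icc q p) (fun i => Y i σ)) Gbar τ :=
    (HasDerivAt.fun_sum hmainG).div_const _
  have hvar : HasDerivAt (fun σ => var2 (Finset.Icc q p) (fun i => Y i σ))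
      (∑ i ∈ Finset.Icc q p,
        2 * (Y i τ - meanOn (Finset.Icc q p) (fun j => Y j τ)) * (G i - Gbar)) τ := by
    have h6 : ∀ i ∈ Finset.Icc q p,
        HasDerivAt (fun σ => (Y i σ - meanOn (Finset.Icc q p) (fun j => Y j σ)) ^ 2)
          (2 * (Y i τ - meanOn (Finset.Icc q p) (fun j => Y j τ)) * (G i - Gbar)) τ := by
      intro i hi
      have h7 := ((hmainG i hi).sub hmean).pow 2
      norm_num at h7
      exact h7
    exact HasDerivAt.fun_sum h6
  have hderiv : deriv (fun σ => var2 (Finset.Icc q p) (fun i => Y i σ)) τ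
      = ∑ i ∈ Finset.Icc q p,
          2 * (Y i τ - meanOn (Finset.Icc q p) (fun j => Y j τ)) * (G i - Gbar) := hvar.deriv
  have hcardpos : (0:ℝ) < ((Finset.Icc q p).card : ℝ) := by
    have h8 : q ∈ Finset.Icc q p := Finset.mem_Icc.mpr ⟨le_refl q, le_of_lt hqp⟩
    exact_mod_cast Finset.card_pos.mpr ⟨q, h8⟩
  have hcardne : ((Finset.Icc q p).card : ℝ) ≠ 0 := ne_of_gt hcardpos
  have hsumd : ∑ i ∈ Finset.Icc q p,
      (Y i τ - meanOn (Finset.Icc q p) (fun j => Y j τ)) = 0 := by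
    have h8 : meanOn (Finset.Icc q p) (fun j => Y j τ) * ((Finset.Icc q p).card : ℝ)
        = ∑ i ∈ Finset.Icc q p, Y i τ := by
      simp only [meanOn]
      exact div_mul_cancel₀ _ hcardne
    rw [Finset.sum_sub_distrib, Finset.sum_const, nsmul_eq_mul]
    linarith [h8]
  have hP2 : var2 (Finset.Icc q p) (fun i => Y i τ)
      = ∑ i ∈ Finset.Icc q p, (Y i τ - meanOn (Finset.Icc q p) (fun j => Y j τ)) ^ 2 := by
    simp only [var2]
  have hhalf : (1 / 2 : ℝ) * deriv (fun σ => var2 (Finset.Icc q p) (fun i => Y i σ)) τ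
      = (∑ i ∈ Finset.Icc q p, (Y i τ - meanOn (Finset.Icc q p) (fun j => Y j τ))
            * ksRHS N χ (fun j => Y j τ) i)
        + α * var2 (Finset.Icc q p) (fun i => Y i τ) := by
    rw [hderiv]
    have hexp : ∀ i ∈ Finset.Icc q p,
        2 * (Y i τ - meanOn (Finset.Icc q p) (fun j => Y j τ)) * (G i - Gbar)
        = 2 * ((Y i τ - meanOn (Finset.Icc q p) (fun j => Y j τ))
              * ksRHS N χ (fun j => Y j τ) i)
          + 2 * α * ((Y i τ - meanOn (Finset.Icc q p) (fun j => Y j τ)) ^ 2)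
          + (2 * α * meanOn (Finset.Icc q p) (fun j => Y j τ) - 2 * Gbar)
              * (Y i τ - meanOn (Finset.Icc q p) (fun j => Y j τ)) := by
      intro i _
      simp only [hGdef]
      ring
    rw [Finset.sum_congr rfl hexp, Finset.sum_add_distrib, Finset.sum_add_distrib,
      ← Finset.mul_sum, ← Finset.mul_sum, ← Finset.mul_sum, hsumd, ← hP2]
    ring
  have hkey := key_est N q p χ hχ0 h1q hqp hpN (fun i => Y i τ) hYord
  have habs := abs_le.mp hkey
  have hC0 : (0:ℝ) < 2 + 2 * χ / Real.sqrt N := by positivity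
  have hP2nn : 0 ≤ var2 (Finset.Icc q p) (fun i => Y i τ) := by
    rw [hP2]
    exact Finset.sum_nonneg fun i _ => sq_nonneg _
  have hQ0 : 0 ≤ Real.sqrt (var2 (Finset.Icc q p) (fun i => Y i τ)
      * extPot N (Finset.Icc q p) 2 (fun i => Y i τ)) := Real.sqrt_nonneg _
  have hCne : (2 + 2 * χ / Real.sqrt N) ≠ 0 := ne_of_gt hC0
  constructor
  · intro hnk hQle
    have hA0 : 0 < ((p : ℝ) - q) * (1 - χ * ((p : ℝ) - q + 1) / ((N : ℝ) + 1)) := by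
      have h8 : p + 2 ≤ k + q := by omega
      have hcast : (p:ℝ) - q + 1 ≤ (k:ℝ) - 1 := by
        have h9 : ((p:ℝ) + 2) ≤ (k:ℝ) + q := by exact_mod_cast h8
        linarith
      have hppos : (1:ℝ) ≤ (p:ℝ) - q := by
        have h9 : ((q:ℝ) + 1) ≤ p := by exact_mod_cast hqp
        linarith
      have hkm1 : (0:ℝ) < (k:ℝ) - 1 := by
        have : (2:ℝ) ≤ (k:ℝ) := by exact_mod_cast hk
        linarith
      have hχk : χ * ((k:ℝ) - 1) < (N:ℝ) + 1 := by
        have := (lt_div_iff₀ hkm1).mp hχ2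
        linarith
      have h9 : χ * ((p:ℝ) - q + 1) ≤ χ * ((k:ℝ) - 1) :=
        mul_le_mul_of_nonneg_left hcast (le_of_lt hχ0)
      have h10 : 0 < 1 - χ * ((p:ℝ) - q + 1) / ((N:ℝ) + 1) := by
        rw [sub_pos, div_lt_one (by positivity : (0:ℝ) < (N:ℝ) + 1)]
        linarith
      exact mul_pos (by linarith) h10
    have hCQ : (2 + 2 * χ / Real.sqrt N)
        * Real.sqrt (var2 (Finset.Icc q p) (fun i => Y i τ)
            * extPot N (Finset.Icc q p) 2 (fun i => Y i τ))
        ≤ ((p : ℝ) - q) * (1 - χ * ((p : ℝ) - q + 1) / ((N : ℝ) + 1)) / 2 := by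
      have h11 := mul_le_mul_of_nonneg_left hQle (le_of_lt hC0)
      have h12 : (2 + 2 * χ / Real.sqrt N)
          * (((p : ℝ) - q) * (1 - χ * ((p : ℝ) - q + 1) / ((N : ℝ) + 1))
              / (2 * (2 + 2 * χ / Real.sqrt N)))
          = ((p : ℝ) - q) * (1 - χ * ((p : ℝ) - q + 1) / ((N : ℝ) + 1)) / 2 := by
        field_simp
      linarith
    have hαP := mul_nonneg (le_of_lt hα0) hP2nn
    constructor
    · linarith
    · rw [hhalf]
      linarith [habs.1]
  · intro hk2 hQle
    have hCQ : (2 + 2 * χ / Real.sqrt N)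
        * Real.sqrt (var2 (Finset.Icc q p) (fun i => Y i τ)
            * extPot N (Finset.Icc q p) 2 (fun i => Y i τ))
        ≤ -(((p : ℝ) - q) * (1 - χ * ((p : ℝ) - q + 1) / ((N : ℝ) + 1))) / 2 := by
      have h11 := mul_le_mul_of_nonneg_left hQle (le_of_lt hC0)
      have h12 : (2 + 2 * χ / Real.sqrt N)
          * (-(((p : ℝ) - q) * (1 - χ * ((p : ℝ) - q + 1) / ((N : ℝ) + 1)))
              / (2 * (2 + 2 * χ / Real.sqrt N)))
          = -(((p : ℝ) - q) * (1 - χ * ((p : ℝ) - q + 1) / ((N : ℝ) + 1))) / 2 := by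
        field_simp
      linarith
    rw [hhalf]
    linarith [habs.2]
end
end

section
/- Let Y : [0,∞) → ℝ^N be a solution of the rescaled gradient flow Y' = −∇E^resc(Y) satisfying conditions (R1)–(R5) with constant A for an inner set I = [l, l+k−1]. Then there exists C > 0 (depending only on N, χ, α, A) such that for all τ > 0: the ℓ² norm over I of the difference ∇E^resc_k((Y_i)_{i∈I}) − (∇_i E^resc(Y))_{i∈I} is at most C e^{−ατ}. -/
open Filter

noncomputable section

/-- Gradient of the rescaled energy
`E^resc(Y) = -∑ log(Y_{i+1}-Y_i) + χ h_N ∑_{i≠j} log|Y_i-Y_j| - (α/2)|Y|²`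
with respect to `Y_i`, with the boundary conventions. -/
def gradResc (N : ℕ) (χ α : ℝ) (y : ℕ → ℝ) (i : ℕ) : ℝ :=
  (if i < N then 1 / (y (i + 1) - y i) else 0)
    - (if 1 < i then 1 / (y i - y (i - 1)) else 0)
    - 2 * χ * hN N * ∑ j ∈ (Finset.Icc 1 N).erase i, 1 / (y j - y i)
    - α * y i

/-- Gradient of the local rescaled energy `E^resc_k`, restricted to the inner set
`I = [l, l+k-1]`, with respect to `Y_i` for `i ∈ I`. -/
def gradRescK (N : ℕ) (χ α : ℝ) (l k : ℕ) (y : ℕ → ℝ) (i : ℕ) : ℝ :=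
  (if i < l + k - 1 then 1 / (y (i + 1) - y i) else 0)
    - (if l < i then 1 / (y i - y (i - 1)) else 0)
    - 2 * χ * hN N * ∑ j ∈ (Finset.Icc l (l + k - 1)).erase i, 1 / (y j - y i)
    - α * y i

/-- The local rescaled energy
`E^resc_k(Y) = -∑_{i=l}^{l+k-2} log(Y_{i+1}-Y_i) + χ h_N ∑_{i≠j∈I} log|Y_i-Y_j|
  - (α/2) ∑_{i∈I} Y_i²` for the inner set `I = [l, l+k-1]`. -/
def ErescK (N : ℕ) (χ α : ℝ) (l k : ℕ) (y : ℕ → ℝ) : ℝ :=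
  -∑ i ∈ Finset.Icc l (l + k - 2), Real.log (y (i + 1) - y i)
    + χ * hN N * ∑ i ∈ Finset.Icc l (l + k - 1),
        ∑ j ∈ (Finset.Icc l (l + k - 1)).erase i, Real.log |y i - y j|
    - α / 2 * ∑ i ∈ Finset.Icc l (l + k - 1), (y i) ^ 2

/-- A solution of the rescaled gradient flow `Y' = -∇E^resc(Y)` defined for all `τ ≥ 0`
with ordered particles (condition (R1)). -/
structure IsRescSol (N : ℕ) (χ α : ℝ) (Y : ℕ → ℝ → ℝ) : Prop where
  ordered : ∀ τ : ℝ, 0 ≤ τ → ∀ i, 1 ≤ i → i < N → Y i τ < Y (i + 1) τ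
  ode : ∀ i ∈ Finset.Icc 1 N, ∀ τ : ℝ, 0 ≤ τ →
    HasDerivAt (Y i) (-(gradResc N χ α (fun j => Y j τ) i)) τ

/-- for a solution of the rescaled gradient flow satisfying (R1)–(R5) with
constant `A` for the inner set `I = [l, l+k-1]`, the ℓ² norm over `I` of the difference
between the local gradient `∇E^resc_k` and the full gradient `∇E^resc` decays like
`C e^{-ατ}`. -/
theorem stmt15 (N k l : ℕ) (hN2 : 2 ≤ N) (hk : 2 ≤ k) (hkN : k ≤ N)
    (hl : 1 ≤ l) (hlk : l + k - 1 ≤ N)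
    (χ α : ℝ) (hχ1 : ((N : ℝ) + 1) / k < χ) (hχ2 : χ < ((N : ℝ) + 1) / ((k : ℝ) - 1))
    (hα : α = ((k : ℝ) - 1) * (χ * k / ((N : ℝ) + 1) - 1))
    (Y : ℕ → ℝ → ℝ) (hY : IsRescSol N χ α Y)
    (A : ℝ) (hA : 0 < A)
    (hR2 : ∀ τ : ℝ, 0 ≤ τ → ∀ i ∈ Finset.Icc l (l + k - 1), |Y i τ| ≤ A)
    (hR3 : ∀ τ : ℝ, 0 ≤ τ → ∀ i, l ≤ i → i < l + k - 1 → 1 / A ≤ Y (i + 1) τ - Y i τ)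
    (hR4 : ∀ j ∈ Finset.Icc 1 N, j ∉ Finset.Icc l (l + k - 1) →
      Filter.Tendsto (fun τ => |Y j τ|) atTop atTop)
    (hR5 : ∀ τ : ℝ, 0 ≤ τ →
      extPot N (Finset.Icc l (l + k - 1)) 2 (fun i => Y i τ) ≤ A ^ 2 * Real.exp (-2 * α * τ)) :
    ∃ C > 0, ∀ τ : ℝ, 0 < τ →
      Real.sqrt (∑ i ∈ Finset.Icc l (l + k - 1),
          (gradRescK N χ α l k (fun j => Y j τ) i - gradResc N χ α (fun j => Y j τ) i) ^ 2)
        ≤ C * Real.exp (-α * τ) := by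
  classical
  have hχpos : 0 < χ := lt_trans (by positivity) hχ1
  have hNpos : (0:ℝ) < hN N := by unfold hN; positivity
  have hNR : (0:ℝ) < N := by exact_mod_cast Nat.lt_of_lt_of_le Nat.zero_lt_two hN2
  set I : Finset ℕ := Finset.Icc l (l + k - 1) with hIdef
  have hIsub : I ⊆ Finset.Icc 1 N := Finset.Icc_subset_Icc hl hlk
  set M : ℝ := 2 * A + 2 * χ * hN N * N * A with hMdef
  have hMpos : 0 < M := by
    have h1 : 0 ≤ 2 * χ * hN N * N * A := by positivity
    have h2 : 0 < 2 * A := by linarith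
    linarith
  have key : ∀ τ : ℝ, 0 ≤ τ → ∀ i ∈ I, ∀ j ∈ Finset.Icc 1 N \ I,
      |1 / (Y j τ - Y i τ)| ≤ A * Real.exp (-α * τ) := by
    intro τ hτ i hi j hj
    have h5 := hR5 τ hτ
    have hterm : 1 / (Y j τ - Y i τ) ^ 2 ≤ extPot N I 2 (fun i => Y i τ) := by
      unfold extPot
      calc 1 / (Y j τ - Y i τ) ^ 2
          ≤ ∑ i ∈ I, 1 / (Y j τ - Y i τ) ^ 2 :=
            Finset.single_le_sum (f := fun i' => 1 / (Y j τ - Y i' τ) ^ 2)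
              (fun a _ => by positivity) hi
        _ ≤ ∑ j ∈ Finset.Icc 1 N \ I, ∑ i ∈ I, 1 / (Y j τ - Y i τ) ^ 2 :=
            Finset.single_le_sum
              (f := fun j => ∑ i ∈ I, 1 / (Y j τ - Y i τ) ^ 2)
              (fun a _ => Finset.sum_nonneg fun b _ => by positivity) hj
    have hex : Real.exp (-2 * α * τ) = Real.exp (-α * τ) * Real.exp (-α * τ) := by
      rw [← Real.exp_add]; ring_nf
    have h2 : (1 / (Y j τ - Y i τ)) ^ 2 ≤ (A * Real.exp (-α * τ)) ^ 2 := by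
      have heq : (1 / (Y j τ - Y i τ)) ^ 2 = 1 / (Y j τ - Y i τ) ^ 2 := by
        rw [div_pow, one_pow]
      rw [heq]
      calc 1 / (Y j τ - Y i τ) ^ 2 ≤ A ^ 2 * Real.exp (-2 * α * τ) := le_trans hterm h5
        _ = (A * Real.exp (-α * τ)) ^ 2 := by rw [hex]; ring
    calc |1 / (Y j τ - Y i τ)| = Real.sqrt ((1 / (Y j τ - Y i τ)) ^ 2) :=
          (Real.sqrt_sq_eq_abs _).symm
      _ ≤ Real.sqrt ((A * Real.exp (-α * τ)) ^ 2) := Real.sqrt_le_sqrt h2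
      _ = A * Real.exp (-α * τ) := Real.sqrt_sq (by positivity)
  refine ⟨Real.sqrt N * M, mul_pos (Real.sqrt_pos.mpr hNR) hMpos, ?_⟩
  intro τ hτ
  have hτ0 : (0:ℝ) ≤ τ := le_of_lt hτ
  have hexp : (0:ℝ) < Real.exp (-α * τ) := Real.exp_pos _
  have bnd : ∀ i ∈ I,
      |gradRescK N χ α l k (fun j => Y j τ) i - gradResc N χ α (fun j => Y j τ) i|
        ≤ M * Real.exp (-α * τ) := by
    intro i hi
    have hiI : l ≤ i ∧ i ≤ l + k - 1 := Finset.mem_Icc.mp hi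
    set y : ℕ → ℝ := fun j => Y j τ with hy
    set S : ℝ := ∑ j ∈ Finset.Icc 1 N \ I, 1 / (y j - y i) with hSdef
    have hsub : I.erase i ⊆ (Finset.Icc 1 N).erase i := Finset.erase_subset_erase _ hIsub
    have hsd : (Finset.Icc 1 N).erase i \ I.erase i = Finset.Icc 1 N \ I := by
      ext x
      constructor
      · intro hx
        rw [Finset.mem_sdiff] at hx ⊢
        obtain ⟨hx1, hx2⟩ := hx
        exact ⟨Finset.mem_of_mem_erase hx1,
          fun hxI => hx2 (Finset.mem_erase.mpr ⟨(Finset.mem_erase.mp hx1).1, hxI⟩)⟩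
      · intro hx
        rw [Finset.mem_sdiff] at hx ⊢
        obtain ⟨hx1, hx2⟩ := hx
        have hxi : x ≠ i := fun h => hx2 (h ▸ hi)
        exact ⟨Finset.mem_erase.mpr ⟨hxi, hx1⟩, fun h => hx2 (Finset.mem_of_mem_erase h)⟩
    have hsum : ∑ j ∈ (Finset.Icc 1 N).erase i, 1 / (y j - y i)
        - ∑ j ∈ I.erase i, 1 / (y j - y i) = S := by
      have h := Finset.sum_sdiff_eq_sub (f := fun j => 1 / (y j - y i)) hsub
      rw [hsd] at h
      exact h.symm
    have heq : gradRescK N χ α l k y i - gradResc N χ α y i =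
        ((if i < l + k - 1 then 1 / (y (i + 1) - y i) else 0)
          - (if i < N then 1 / (y (i + 1) - y i) else 0))
        + ((if 1 < i then 1 / (y i - y (i - 1)) else 0)
          - (if l < i then 1 / (y i - y (i - 1)) else 0))
        + 2 * χ * hN N * S := by
      rw [← hsum]
      unfold gradRescK gradResc
      rw [← hIdef]
      ring
    have hT1 : |(if i < l + k - 1 then 1 / (y (i + 1) - y i) else 0)
        - (if i < N then 1 / (y (i + 1) - y i) else 0)| ≤ A * Real.exp (-α * τ) := by
      by_cases h1 : i < l + k - 1
      · have h2 : i < N := by omega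
        rw [if_pos h1, if_pos h2, sub_self, abs_zero]
        positivity
      · by_cases h2 : i < N
        · rw [if_neg h1, if_pos h2, zero_sub, abs_neg]
          refine key τ hτ0 i hi (i + 1) ?_
          rw [Finset.mem_sdiff, Finset.mem_Icc, hIdef, Finset.mem_Icc]
          omega
        · rw [if_neg h1, if_neg h2, sub_self, abs_zero]
          positivity
    have hT2 : |(if 1 < i then 1 / (y i - y (i - 1)) else 0)
        - (if l < i then 1 / (y i - y (i - 1)) else 0)| ≤ A * Real.exp (-α * τ) := by
      by_cases h1 : l < i
      · have h2 : 1 < i := by omega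
        rw [if_pos h1, if_pos h2, sub_self, abs_zero]
        positivity
      · by_cases h2 : 1 < i
        · rw [if_neg h1, if_pos h2, sub_zero]
          have habs : |1 / (y i - y (i - 1))| = |1 / (y (i - 1) - y i)| := by
            rw [abs_div, abs_div, abs_one, abs_sub_comm]
          rw [habs]
          refine key τ hτ0 i hi (i - 1) ?_
          rw [Finset.mem_sdiff, Finset.mem_Icc, hIdef, Finset.mem_Icc]
          omega
        · rw [if_neg h1, if_neg h2, sub_self, abs_zero]
          positivity
    have hcard : ((Finset.Icc 1 N \ I).card : ℝ) ≤ (N : ℝ) := by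
      have h1 : (Finset.Icc 1 N \ I).card ≤ (Finset.Icc 1 N).card :=
        Finset.card_le_card (Finset.sdiff_subset)
      have h2 : (Finset.Icc 1 N).card = N := by rw [Nat.card_Icc]; omega
      exact_mod_cast h2 ▸ h1
    have hT3 : |2 * χ * hN N * S| ≤ 2 * χ * hN N * (N : ℝ) * (A * Real.exp (-α * τ)) := by
      rw [abs_mul, abs_of_pos (by positivity : (0:ℝ) < 2 * χ * hN N)]
      have hS : |S| ≤ (N : ℝ) * (A * Real.exp (-α * τ)) := by
        calc |S| ≤ ∑ j ∈ Finset.Icc 1 N \ I, |1 / (y j - y i)| :=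
              Finset.abs_sum_le_sum_abs _ _
          _ ≤ ∑ _j ∈ Finset.Icc 1 N \ I, A * Real.exp (-α * τ) :=
              Finset.sum_le_sum fun j hj => key τ hτ0 i hi j hj
          _ = ((Finset.Icc 1 N \ I).card : ℝ) * (A * Real.exp (-α * τ)) := by
              rw [Finset.sum_const, nsmul_eq_mul]
          _ ≤ (N : ℝ) * (A * Real.exp (-α * τ)) :=
              mul_le_mul_of_nonneg_right hcard (by positivity)
      calc 2 * χ * hN N * |S| ≤ 2 * χ * hN N * ((N : ℝ) * (A * Real.exp (-α * τ))) :=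
            mul_le_mul_of_nonneg_left hS (by positivity)
        _ = 2 * χ * hN N * (N : ℝ) * (A * Real.exp (-α * τ)) := by ring
    calc |gradRescK N χ α l k y i - gradResc N χ α y i|
        ≤ |(if i < l + k - 1 then 1 / (y (i + 1) - y i) else 0)
            - (if i < N then 1 / (y (i + 1) - y i) else 0)|
          + |(if 1 < i then 1 / (y i - y (i - 1)) else 0)
            - (if l < i then 1 / (y i - y (i - 1)) else 0)|
          + |2 * χ * hN N * S| := by
          rw [heq]; exact abs_add_three _ _ _
      _ ≤ A * Real.exp (-α * τ) + A * Real.exp (-α * τ)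
          + 2 * χ * hN N * (N : ℝ) * (A * Real.exp (-α * τ)) := by
          gcongr
      _ = M * Real.exp (-α * τ) := by rw [hMdef]; ring
  have hsum2 : ∑ i ∈ I,
      (gradRescK N χ α l k (fun j => Y j τ) i - gradResc N χ α (fun j => Y j τ) i) ^ 2
        ≤ (N : ℝ) * (M * Real.exp (-α * τ)) ^ 2 := by
    calc ∑ i ∈ I,
        (gradRescK N χ α l k (fun j => Y j τ) i - gradResc N χ α (fun j => Y j τ) i) ^ 2
        ≤ ∑ _i ∈ I, (M * Real.exp (-α * τ)) ^ 2 := by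
          refine Finset.sum_le_sum fun i hi => ?_
          have h := abs_le.mp (bnd i hi)
          exact sq_le_sq' h.1 h.2
      _ = (I.card : ℝ) * (M * Real.exp (-α * τ)) ^ 2 := by
          rw [Finset.sum_const, nsmul_eq_mul]
      _ ≤ (N : ℝ) * (M * Real.exp (-α * τ)) ^ 2 := by
          have h1 : I.card ≤ N := by
            rw [hIdef, Nat.card_Icc]; omega
          have h1' : (I.card : ℝ) ≤ (N : ℝ) := by exact_mod_cast h1
          exact mul_le_mul_of_nonneg_right h1' (by positivity)
  calc Real.sqrt (∑ i ∈ I,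
        (gradRescK N χ α l k (fun j => Y j τ) i - gradResc N χ α (fun j => Y j τ) i) ^ 2)
      ≤ Real.sqrt ((N : ℝ) * (M * Real.exp (-α * τ)) ^ 2) := Real.sqrt_le_sqrt hsum2
    _ = Real.sqrt N * (M * Real.exp (-α * τ)) := by
        rw [Real.sqrt_mul (le_of_lt hNR), Real.sqrt_sq (by positivity)]
    _ = Real.sqrt N * M * Real.exp (-α * τ) := by ring
end
end

section
/- Let Y : [0,∞) → ℝ^N be a solution of the rescaled gradient flow Y' = −∇E^resc(Y) satisfying conditions (R1)–(R6) with constant A for an inner set I = [l, l+k−1]. Then: (i) Y_i'(τ) → 0 as τ → ∞ for every i ∈ I; (ii) E^resc_k(Y(τ)) converges to a limit e_∞ as τ → ∞; (iii) ∇E^resc_k((Y_i(τ))_{i∈I}) → 0 as τ → ∞. -/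
open Filter

noncomputable section

private lemma abs_one_div_le_of_le {x A : ℝ} (hA : 0 < A) (hx : 1 / A ≤ |x|) : |1 / x| ≤ A := by
  have h0 : (0:ℝ) < 1 / A := by positivity
  have hx0 : (0:ℝ) < |x| := lt_of_lt_of_le h0 hx
  rw [abs_div, abs_one, div_le_iff₀ hx0]
  calc (1:ℝ) = A * (1/A) := by field_simp
  _ ≤ A * |x| := by nlinarith

private lemma one_div_diff_lip {x y m : ℝ} (hm : 0 < m) (hx : m ≤ |x|) (hy : m ≤ |y|) :
    |1 / x - 1 / y| ≤ 1 / m ^ 2 * |x - y| := by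
  have hx0 : x ≠ 0 := by intro h; rw [h, abs_zero] at hx; linarith
  have hy0 : y ≠ 0 := by intro h; rw [h, abs_zero] at hy; linarith
  have hxa : (0:ℝ) < |x| := abs_pos.mpr hx0
  have hya : (0:ℝ) < |y| := abs_pos.mpr hy0
  have key : 1 / x - 1 / y = (y - x) / (x * y) := by field_simp
  rw [key, abs_div, abs_mul, abs_sub_comm]
  rw [div_le_iff₀ (by positivity)]
  have h1 : m ^ 2 ≤ |x| * |y| := by nlinarith
  have h2 : (0:ℝ) ≤ |x - y| := abs_nonneg _
  have hm2 : (0:ℝ) < m ^ 2 := by positivity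
  have h3 : 1 / m ^ 2 * |x - y| * m ^ 2 = |x - y| := by field_simp
  nlinarith [mul_le_mul_of_nonneg_left h1 (mul_nonneg (le_of_lt (by positivity : (0:ℝ) < 1 / m^2)) h2)]

private lemma antitoneOn_of_hasDerivAt_nonpos {f f' : ℝ → ℝ} {s : Set ℝ}
    (hs : Convex ℝ s) (hf : ∀ x ∈ s, HasDerivAt f (f' x) x) (h0 : ∀ x ∈ s, f' x ≤ 0) :
    AntitoneOn f s := by
  apply antitoneOn_of_deriv_nonpos hs
  · exact fun x hx => (hf x hx).continuousAt.continuousWithinAt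
  · exact fun x hx => ((hf x (interior_subset hx)).differentiableAt).differentiableWithinAt
  · intro x hx
    rw [(hf x (interior_subset hx)).deriv]
    exact h0 x (interior_subset hx)

private lemma barbalat {G Φ : ℝ → ℝ} {L m : ℝ} (hL : 0 < L)
    (hG0 : ∀ τ, 0 ≤ G τ)
    (hGlip : ∀ σ ∈ Set.Ici (0:ℝ), ∀ τ ∈ Set.Ici (0:ℝ), |G σ - G τ| ≤ L * |σ - τ|)
    (hΦlb : ∀ τ ∈ Set.Ici (0:ℝ), m ≤ Φ τ)
    (hΦdec : ∀ c : ℝ, 0 ≤ c → ∀ a ∈ Set.Ici (0:ℝ), ∀ b ∈ Set.Ici (0:ℝ), a ≤ b →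
      (∀ x ∈ Set.Icc a b, c ≤ G x) → Φ b + c * b ≤ Φ a + c * a) :
    Tendsto G atTop (nhds 0) := by

  by_contra hcon
  rw [Metric.tendsto_nhds] at hcon
  push_neg at hcon
  obtain ⟨ε, hε, hfreq⟩ := hcon
  rw [Filter.frequently_atTop] at hfreq
  set δ := ε / (2 * L) with hδdef
  have hδ : 0 < δ := by positivity
  have hLδ : L * δ = ε / 2 := by rw [hδdef]; field_simp
  have key : ∀ τ0 ∈ Set.Ici (0:ℝ), ε ≤ G τ0 → Φ (τ0 + δ) ≤ Φ τ0 - ε / 2 * δ := by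
    intro τ0 hτ0 hGτ0
    have hτ0' : (0:ℝ) ≤ τ0 := hτ0
    have h1 : ∀ x ∈ Set.Icc τ0 (τ0 + δ), ε / 2 ≤ G x := by
      intro x hx
      have hx0 : x ∈ Set.Ici (0:ℝ) := le_trans hτ0' hx.1
      have habs : |x - τ0| ≤ δ := by
        rw [abs_of_nonneg (by linarith [hx.1])]; linarith [hx.2]
      have h2 := abs_le.mp (hGlip x hx0 τ0 hτ0)
      have h3 : L * |x - τ0| ≤ L * δ := mul_le_mul_of_nonneg_left habs hL.le
      linarith [h2.1]
    have h4 := hΦdec (ε/2) (by linarith) τ0 hτ0 (τ0 + δ) (by simp only [Set.mem_Ici]; linarith)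
      (by linarith) h1
    nlinarith
  have hanti : ∀ a ∈ Set.Ici (0:ℝ), ∀ b ∈ Set.Ici (0:ℝ), a ≤ b → Φ b ≤ Φ a := by
    intro a ha b hb hab
    have := hΦdec 0 le_rfl a ha b hb hab (fun x _ => hG0 x)
    simpa using this
  have hmain : ∀ n : ℕ, ∃ τ ∈ Set.Ici (0:ℝ), Φ τ ≤ Φ 0 - n * (ε / 2 * δ) := by
    intro n; induction n with
    | zero => exact ⟨0, Set.self_mem_Ici, by simp⟩
    | succ n ih =>
      obtain ⟨τ, hτ, hΦτ⟩ := ih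
      obtain ⟨τ', hτ', hGτ'⟩ := hfreq τ
      have hτ'0 : τ' ∈ Set.Ici (0:ℝ) := le_trans hτ hτ'
      have hGε : ε ≤ G τ' := by
        rw [Real.dist_eq, sub_zero, abs_of_nonneg (hG0 τ')] at hGτ'
        linarith [hGτ']
      refine ⟨τ' + δ, by simp only [Set.mem_Ici]; have : (0:ℝ) ≤ τ' := hτ'0; linarith, ?_⟩
      have h1 := key τ' hτ'0 hGε
      have h2 := hanti τ hτ τ' hτ'0 hτ'
      push_cast
      linarith
  obtain ⟨n, hn⟩ := exists_nat_gt ((Φ 0 - m) / (ε / 2 * δ))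
  obtain ⟨τ, hτ, hΦτ⟩ := hmain n
  have hlb := hΦlb τ hτ
  have hpos : 0 < ε / 2 * δ := by positivity
  have := (div_lt_iff₀ hpos).mp hn
  linarith

private lemma sum_erase_swap (I : Finset ℕ) (f : ℕ → ℕ → ℝ) :
    ∑ i ∈ I, ∑ j ∈ I.erase i, f i j = ∑ i ∈ I, ∑ j ∈ I.erase i, f j i := by
  rw [Finset.sum_comm' (t := fun i => I.erase i) (s' := fun j => I.erase j) (t' := I)]
  intro x y
  simp only [Finset.mem_erase]
  constructor
  · rintro ⟨h1, h2, h3⟩; exact ⟨⟨Ne.symm h2, h1⟩, h3⟩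
  · rintro ⟨⟨h1, h2⟩, h3⟩; exact ⟨h2, Ne.symm h1, h3⟩

private lemma grad_identity (N k l : ℕ) (hk : 2 ≤ k) (hl : 1 ≤ l) (χ α : ℝ) (y v : ℕ → ℝ) :
    ∑ i ∈ Finset.Icc l (l + k - 1), gradRescK N χ α l k y i * v i
      = -(∑ i ∈ Finset.Icc l (l + k - 2), (v (i + 1) - v i) / (y (i + 1) - y i))
        + χ * hN N * ∑ i ∈ Finset.Icc l (l + k - 1), ∑ j ∈ (Finset.Icc l (l + k - 1)).erase i,
            (v i - v j) / (y i - y j)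
        - α / 2 * ∑ i ∈ Finset.Icc l (l + k - 1), 2 * y i * v i := by

  have hsplit1 : Finset.Icc l (l + k - 1) = insert (l + k - 1) (Finset.Icc l (l + k - 2)) := by
    ext x; simp only [Finset.mem_Icc, Finset.mem_insert]; omega
  have hsplit2 : Finset.Icc l (l + k - 1) = insert l (Finset.Icc (l + 1) (l + k - 1)) := by
    ext x; simp only [Finset.mem_Icc, Finset.mem_insert]; omega
  have hmap : Finset.Icc (l + 1) (l + k - 1)
      = (Finset.Icc l (l + k - 2)).map (addRightEmbedding 1) := by
    rw [Finset.map_add_right_Icc]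
    congr 1
    omega
  have e1 : ∑ i ∈ Finset.Icc l (l + k - 1),
        (if i < l + k - 1 then 1 / (y (i + 1) - y i) * v i else 0)
      = ∑ i ∈ Finset.Icc l (l + k - 2), v i / (y (i + 1) - y i) := by
    rw [hsplit1, Finset.sum_insert (by simp only [Finset.mem_Icc]; omega)]
    rw [if_neg (lt_irrefl _), zero_add]
    apply Finset.sum_congr rfl
    intro i hi
    rw [Finset.mem_Icc] at hi
    rw [if_pos (by omega), one_div_mul_eq_div]
  have e2 : ∑ i ∈ Finset.Icc l (l + k - 1),
        (if l < i then 1 / (y i - y (i - 1)) * v i else 0)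
      = ∑ i ∈ Finset.Icc l (l + k - 2), v (i + 1) / (y (i + 1) - y i) := by
    rw [hsplit2, Finset.sum_insert (by simp only [Finset.mem_Icc]; omega)]
    rw [if_neg (lt_irrefl _), zero_add]
    rw [hmap, Finset.sum_map]
    apply Finset.sum_congr rfl
    intro i hi
    rw [Finset.mem_Icc] at hi
    simp only [addRightEmbedding_apply]
    rw [if_pos (by omega), Nat.add_sub_cancel, one_div_mul_eq_div]
  have e0 : ∑ i ∈ Finset.Icc l (l + k - 2), v i / (y (i + 1) - y i)
        - ∑ i ∈ Finset.Icc l (l + k - 2), v (i + 1) / (y (i + 1) - y i)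
      = -(∑ i ∈ Finset.Icc l (l + k - 2), (v (i + 1) - v i) / (y (i + 1) - y i)) := by
    rw [← Finset.sum_sub_distrib, ← Finset.sum_neg_distrib]
    apply Finset.sum_congr rfl
    intro i _
    rw [div_sub_div_same, ← neg_div, neg_sub]
  have e3 : ∑ i ∈ Finset.Icc l (l + k - 1),
        (2 * χ * hN N * ∑ j ∈ (Finset.Icc l (l + k - 1)).erase i, 1 / (y j - y i)) * v i
      = -(2 * χ * hN N) * ∑ i ∈ Finset.Icc l (l + k - 1),
          ∑ j ∈ (Finset.Icc l (l + k - 1)).erase i, v i / (y i - y j) := by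
    rw [Finset.mul_sum]
    apply Finset.sum_congr rfl
    intro i _
    have h1 : ∀ j ∈ (Finset.Icc l (l + k - 1)).erase i,
        1 / (y j - y i) * v i = -(v i / (y i - y j)) := by
      intro j _
      rw [one_div_mul_eq_div, ← neg_sub (y i) (y j), div_neg]
    calc (2 * χ * hN N * ∑ j ∈ (Finset.Icc l (l + k - 1)).erase i, 1 / (y j - y i)) * v i
        = 2 * χ * hN N * ∑ j ∈ (Finset.Icc l (l + k - 1)).erase i, 1 / (y j - y i) * v i := by
          rw [mul_assoc, Finset.sum_mul]
      _ = 2 * χ * hN N * ∑ j ∈ (Finset.Icc l (l + k - 1)).erase i, -(v i / (y i - y j)) := by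
          rw [Finset.sum_congr rfl h1]
      _ = -(2 * χ * hN N) * ∑ j ∈ (Finset.Icc l (l + k - 1)).erase i, v i / (y i - y j) := by
          rw [Finset.sum_neg_distrib]; ring
  have hD2 : ∑ i ∈ Finset.Icc l (l + k - 1), ∑ j ∈ (Finset.Icc l (l + k - 1)).erase i,
        (v i - v j) / (y i - y j)
      = 2 * ∑ i ∈ Finset.Icc l (l + k - 1), ∑ j ∈ (Finset.Icc l (l + k - 1)).erase i,
          v i / (y i - y j) := by
    have hsub : ∀ i ∈ Finset.Icc l (l + k - 1),
        ∑ j ∈ (Finset.Icc l (l + k - 1)).erase i, (v i - v j) / (y i - y j)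
          = ∑ j ∈ (Finset.Icc l (l + k - 1)).erase i, v i / (y i - y j)
            - ∑ j ∈ (Finset.Icc l (l + k - 1)).erase i, v j / (y i - y j) := by
      intro i _
      rw [← Finset.sum_sub_distrib]
      apply Finset.sum_congr rfl
      intro j _
      rw [div_sub_div_same]
    rw [Finset.sum_congr rfl hsub, Finset.sum_sub_distrib]
    have hswap := sum_erase_swap (Finset.Icc l (l + k - 1)) (fun i j => v j / (y i - y j))
    rw [hswap]
    have : ∑ i ∈ Finset.Icc l (l + k - 1), ∑ j ∈ (Finset.Icc l (l + k - 1)).erase i,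
        v i / (y j - y i)
        = -∑ i ∈ Finset.Icc l (l + k - 1), ∑ j ∈ (Finset.Icc l (l + k - 1)).erase i,
        v i / (y i - y j) := by
      rw [← Finset.sum_neg_distrib]
      apply Finset.sum_congr rfl
      intro i _
      rw [← Finset.sum_neg_distrib]
      apply Finset.sum_congr rfl
      intro j _
      rw [← neg_sub (y i) (y j), div_neg]
    rw [this]
    ring
  have e4 : α / 2 * ∑ i ∈ Finset.Icc l (l + k - 1), 2 * y i * v i
      = ∑ i ∈ Finset.Icc l (l + k - 1), α * y i * v i := by
    rw [Finset.mul_sum]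
    apply Finset.sum_congr rfl
    intro i _
    ring
  simp only [gradRescK, sub_mul, ite_mul, zero_mul, Finset.sum_sub_distrib]
  rw [e1, e2, e3, hD2]
  linear_combination e0 + e4

set_option maxHeartbeats 3200000 in
/-- for a solution of the rescaled gradient flow satisfying (R1)–(R6) with
constant `A` for the inner set `I = [l, l+k-1]`:
(i) `Y_i'(τ) → 0` as `τ → ∞` for every `i ∈ I`;
(ii) `E^resc_k(Y(τ))` converges to a limit `e_∞`;
(iii) `∇E^resc_k((Y_i(τ))_{i∈I}) → 0` as `τ → ∞`. -/
theorem stmt16 (N k l : ℕ) (hN2 : 2 ≤ N) (hk : 2 ≤ k) (hkN : k ≤ N)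
    (hl : 1 ≤ l) (hlk : l + k - 1 ≤ N)
    (χ α : ℝ) (hχ1 : ((N : ℝ) + 1) / k < χ) (hχ2 : χ < ((N : ℝ) + 1) / ((k : ℝ) - 1))
    (hα : α = ((k : ℝ) - 1) * (χ * k / ((N : ℝ) + 1) - 1))
    (Y : ℕ → ℝ → ℝ) (hY : IsRescSol N χ α Y)
    (A : ℝ) (hA : 0 < A)
    (hR2 : ∀ τ : ℝ, 0 ≤ τ → ∀ i ∈ Finset.Icc l (l + k - 1), |Y i τ| ≤ A)
    (hR3 : ∀ τ : ℝ, 0 ≤ τ → ∀ i, l ≤ i → i < l + k - 1 → 1 / A ≤ Y (i + 1) τ - Y i τ)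
    (hR4 : ∀ j ∈ Finset.Icc 1 N, j ∉ Finset.Icc l (l + k - 1) →
      Filter.Tendsto (fun τ => |Y j τ|) atTop atTop)
    (hR5 : ∀ τ : ℝ, 0 ≤ τ →
      extPot N (Finset.Icc l (l + k - 1)) 2 (fun i => Y i τ) ≤ A ^ 2 * Real.exp (-2 * α * τ))
    (hR6 : ∀ τ : ℝ, 0 ≤ τ → ∀ i ∈ Finset.Icc 1 N, ∀ j ∈ Finset.Icc 1 N, i ≠ j →
      1 / A ≤ |Y i τ - Y j τ|) :
    (∀ i ∈ Finset.Icc l (l + k - 1),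
        Filter.Tendsto (fun τ => deriv (Y i) τ) atTop (nhds 0)) ∧
    (∃ e : ℝ, Filter.Tendsto (fun τ => ErescK N χ α l k (fun i => Y i τ)) atTop (nhds e)) ∧
    Filter.Tendsto
      (fun τ => Real.sqrt (∑ i ∈ Finset.Icc l (l + k - 1),
        (gradRescK N χ α l k (fun j => Y j τ) i) ^ 2)) atTop (nhds 0) := by
  classical
  have hNp : (0:ℝ) < (N:ℝ) + 1 := by positivity
  have hkR0 : (0:ℝ) < (k:ℝ) := by
    have : (0:ℕ) < k := by omega
    exact_mod_cast this
  have hhN : 0 < hN N := by rw [hN]; positivity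
  have hχ : 0 < χ := lt_trans (by positivity) hχ1
  have hαpos : 0 < α := by
    rw [hα]
    have h1 : (1:ℝ) ≤ (k:ℝ) - 1 := by
      have : (2:ℝ) ≤ (k:ℝ) := by exact_mod_cast hk
      linarith
    have h2 : (0:ℝ) < χ * k / ((N:ℝ) + 1) - 1 := by
      rw [div_lt_iff₀ hkR0] at hχ1
      rw [sub_pos, lt_div_iff₀ hNp]
      nlinarith
    nlinarith
  have hIsub : Finset.Icc l (l + k - 1) ⊆ Finset.Icc 1 N := by
    intro x hx; rw [Finset.mem_Icc] at hx ⊢; omega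
  have hode : ∀ i ∈ Finset.Icc 1 N, ∀ τ : ℝ, 0 ≤ τ →
      HasDerivAt (Y i) (-(gradResc N χ α (fun j => Y j τ) i)) τ := hY.ode
  have hOterm : ∀ τ : ℝ, 0 ≤ τ → ∀ j ∈ Finset.Icc 1 N \ Finset.Icc l (l + k - 1),
      ∀ i ∈ Finset.Icc l (l + k - 1),
      |1 / (Y j τ - Y i τ)| ≤ A * Real.exp (-α * τ) := by
      intro τ hτ j hj i hi
      have h1 : (1 / (Y j τ - Y i τ)) ^ 2 ≤ extPot N (Finset.Icc l (l + k - 1)) 2 (fun i => Y i τ) := by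
        have hin : (1 / (Y j τ - Y i τ)) ^ 2 ≤ ∑ i' ∈ Finset.Icc l (l + k - 1),
            1 / ((fun i => Y i τ) j - (fun i => Y i τ) i') ^ 2 := by
          have := Finset.single_le_sum
            (f := fun i' => 1 / ((fun i => Y i τ) j - (fun i => Y i τ) i') ^ 2)
            (fun i' _ => by positivity) hi
          simpa [one_div, ← inv_pow] using this
        refine le_trans hin ?_
        exact Finset.single_le_sum
          (f := fun j' => ∑ i' ∈ Finset.Icc l (l + k - 1), 1 / ((fun i => Y i τ) j' - (fun i => Y i τ) i') ^ 2)
          (fun j' _ => Finset.sum_nonneg fun i' _ => by positivity) hj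
      have h2 := le_trans h1 (hR5 τ hτ)
      have h3 : A ^ 2 * Real.exp (-2 * α * τ) = (A * Real.exp (-α * τ)) ^ 2 := by
        rw [mul_pow, pow_two (Real.exp (-α * τ)), ← Real.exp_add]
        ring_nf
      rw [h3] at h2
      have h4 : (0:ℝ) ≤ A * Real.exp (-α * τ) := by positivity
      nlinarith [sq_abs (1 / (Y j τ - Y i τ)), abs_nonneg (1 / (Y j τ - Y i τ))]

  have hB : ∀ τ : ℝ, 0 ≤ τ → ∀ i ∈ Finset.Icc l (l + k - 1),
      |gradRescK N χ α l k (fun j => Y j τ) i| ≤ 2*A + 2*χ*hN N*(k:ℝ)*A + α*A := by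
      intro τ hτ i hi
      have hmem := Finset.mem_Icc.mp hi
      have ht1 : |(if i < l + k - 1 then 1 / (Y (i+1) τ - Y i τ) else 0)| ≤ A := by
        by_cases h : i < l + k - 1
        · rw [if_pos h]
          have hgap := hR3 τ hτ i hmem.1 h
          exact abs_one_div_le_of_le hA (le_trans hgap (le_abs_self _))
        · rw [if_neg h, abs_zero]; linarith
      have ht2 : |(if l < i then 1 / (Y i τ - Y (i-1) τ) else 0)| ≤ A := by
        by_cases h : l < i
        · rw [if_pos h]
          have hgap := hR3 τ hτ (i-1) (by omega) (by omega)
          have he : i - 1 + 1 = i := by omega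
          rw [he] at hgap
          exact abs_one_div_le_of_le hA (le_trans hgap (le_abs_self _))
        · rw [if_neg h, abs_zero]; linarith
      have ht3 : |∑ j ∈ (Finset.Icc l (l + k - 1)).erase i, 1 / (Y j τ - Y i τ)| ≤ (k:ℝ) * A := by
        refine le_trans (Finset.abs_sum_le_sum_abs _ _) ?_
        have hbd : ∀ j ∈ (Finset.Icc l (l + k - 1)).erase i, |1 / (Y j τ - Y i τ)| ≤ A := by
          intro j hj
          obtain ⟨hji, hjI⟩ := Finset.mem_erase.mp hj
          exact abs_one_div_le_of_le hA (hR6 τ hτ j (hIsub hjI) i (hIsub hi) hji)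
        refine le_trans (Finset.sum_le_sum hbd) ?_
        rw [Finset.sum_const, nsmul_eq_mul]
        have hcard : (((Finset.Icc l (l + k - 1)).erase i).card : ℝ) ≤ (k:ℝ) := by
          have h1 : ((Finset.Icc l (l + k - 1)).erase i).card ≤ (Finset.Icc l (l + k - 1)).card :=
            Finset.card_le_card (Finset.erase_subset _ _)
          have h2 : (Finset.Icc l (l + k - 1)).card = k := by rw [Nat.card_Icc]; omega
          exact_mod_cast h1.trans_eq h2
        nlinarith
      have ht4 : |α * Y i τ| ≤ α * A := by
        rw [abs_mul, abs_of_pos hαpos]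
        exact mul_le_mul_of_nonneg_left (hR2 τ hτ i hi) hαpos.le
      have habs3 : |2 * χ * hN N * ∑ j ∈ (Finset.Icc l (l + k - 1)).erase i, 1 / (Y j τ - Y i τ)|
          ≤ 2*χ*hN N*((k:ℝ)*A) := by
        rw [abs_mul]
        have h2 : |2*χ*hN N| = 2*χ*hN N := abs_of_pos (by positivity)
        rw [h2]
        exact mul_le_mul_of_nonneg_left ht3 (by positivity)
      rw [gradRescK]
      calc |(if i < l + k - 1 then 1 / (Y (i+1) τ - Y i τ) else 0)
          - (if l < i then 1 / (Y i τ - Y (i-1) τ) else 0)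
          - 2 * χ * hN N * ∑ j ∈ (Finset.Icc l (l + k - 1)).erase i, 1 / (Y j τ - Y i τ)
          - α * Y i τ|
          ≤ |(if i < l + k - 1 then 1 / (Y (i+1) τ - Y i τ) else 0)|
            + |(if l < i then 1 / (Y i τ - Y (i-1) τ) else 0)|
            + |2 * χ * hN N * ∑ j ∈ (Finset.Icc l (l + k - 1)).erase i, 1 / (Y j τ - Y i τ)|
            + |α * Y i τ| := by
            calc _ ≤ |(if i < l + k - 1 then 1 / (Y (i+1) τ - Y i τ) else 0)
                - (if l < i then 1 / (Y i τ - Y (i-1) τ) else 0)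
                - 2 * χ * hN N * ∑ j ∈ (Finset.Icc l (l + k - 1)).erase i, 1 / (Y j τ - Y i τ)|
                + |α * Y i τ| := abs_sub _ _
              _ ≤ _ := by
                have := abs_sub ((if i < l + k - 1 then 1 / (Y (i+1) τ - Y i τ) else 0)
                  - (if l < i then 1 / (Y i τ - Y (i-1) τ) else 0))
                  (2 * χ * hN N * ∑ j ∈ (Finset.Icc l (l + k - 1)).erase i, 1 / (Y j τ - Y i τ))
                have h2 := abs_sub (if i < l + k - 1 then 1 / (Y (i+1) τ - Y i τ) else 0)
                  (if l < i then 1 / (Y i τ - Y (i-1) τ) else 0)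
                linarith
        _ ≤ A + A + 2*χ*hN N*((k:ℝ)*A) + α*A := by linarith
        _ = 2*A + 2*χ*hN N*(k:ℝ)*A + α*A := by ring

  set B : ℝ := 2*A + 2*χ*hN N*(k:ℝ)*A + α*A with hBdef
  have hBpos : 0 < B := by rw [hBdef]; positivity
  have hC1 : ∀ τ : ℝ, 0 ≤ τ → ∀ i ∈ Finset.Icc l (l + k - 1),
      |gradResc N χ α (fun j => Y j τ) i - gradRescK N χ α l k (fun j => Y j τ) i|
        ≤ (2*A + 2*χ*hN N*(N:ℝ)*A) * Real.exp (-α * τ) := by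
      intro τ hτ i hi
      have hmem := Finset.mem_Icc.mp hi
      set ε : ℝ := A * Real.exp (-α * τ) with hεdef
      have hε0 : 0 ≤ ε := by positivity
      -- decompose the erase-sum
      have hsub : (Finset.Icc l (l + k - 1)).erase i ⊆ (Finset.Icc 1 N).erase i := by
        intro x hx
        rw [Finset.mem_erase] at hx ⊢
        rw [Finset.mem_Icc] at hx ⊢
        omega
      have hsdiff : (Finset.Icc 1 N).erase i \ (Finset.Icc l (l + k - 1)).erase i
          = Finset.Icc 1 N \ Finset.Icc l (l + k - 1) := by
        ext x
        simp only [Finset.mem_sdiff, Finset.mem_erase, Finset.mem_Icc]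
        omega
      have hsum : ∑ j ∈ (Finset.Icc 1 N).erase i, 1 / (Y j τ - Y i τ)
          = ∑ j ∈ Finset.Icc 1 N \ Finset.Icc l (l + k - 1), 1 / (Y j τ - Y i τ)
            + ∑ j ∈ (Finset.Icc l (l + k - 1)).erase i, 1 / (Y j τ - Y i τ) := by
        rw [← Finset.sum_sdiff hsub, hsdiff]
      -- the three difference pieces
      have hd1 : |(if i < N then 1 / (Y (i+1) τ - Y i τ) else 0)
          - (if i < l + k - 1 then 1 / (Y (i+1) τ - Y i τ) else 0)| ≤ ε := by
        by_cases h : i < l + k - 1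
        · rw [if_pos h, if_pos (by omega), sub_self, abs_zero]; exact hε0
        · rw [if_neg h, sub_zero]
          by_cases h2 : i < N
          · rw [if_pos h2]
            refine hOterm τ hτ (i+1) ?_ i hi
            rw [Finset.mem_sdiff, Finset.mem_Icc, Finset.mem_Icc]
            omega
          · rw [if_neg h2, abs_zero]; exact hε0
      have hd2 : |(if 1 < i then 1 / (Y i τ - Y (i-1) τ) else 0)
          - (if l < i then 1 / (Y i τ - Y (i-1) τ) else 0)| ≤ ε := by
        by_cases h : l < i
        · rw [if_pos h, if_pos (by omega), sub_self, abs_zero]; exact hε0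
        · rw [if_neg h, sub_zero]
          by_cases h2 : 1 < i
          · rw [if_pos h2]
            have := hOterm τ hτ (i-1) (by rw [Finset.mem_sdiff, Finset.mem_Icc, Finset.mem_Icc]; omega) i hi
            calc |1 / (Y i τ - Y (i-1) τ)| = |1 / (Y (i-1) τ - Y i τ)| := by
                  rw [← abs_neg (1 / (Y (i-1) τ - Y i τ)), ← one_div_neg_eq_neg_one_div, neg_sub]
              _ ≤ ε := this
          · rw [if_neg h2, abs_zero]; exact hε0
      have hd3 : |∑ j ∈ Finset.Icc 1 N \ Finset.Icc l (l + k - 1), 1 / (Y j τ - Y i τ)| ≤ (N:ℝ) * ε := by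
        refine le_trans (Finset.abs_sum_le_sum_abs _ _) ?_
        refine le_trans (Finset.sum_le_sum (fun j hj => hOterm τ hτ j hj i hi)) ?_
        rw [Finset.sum_const, nsmul_eq_mul]
        have hcard : ((Finset.Icc 1 N \ Finset.Icc l (l + k - 1)).card : ℝ) ≤ (N:ℝ) := by
          have h1 : (Finset.Icc 1 N \ Finset.Icc l (l + k - 1)).card ≤ (Finset.Icc 1 N).card :=
            Finset.card_le_card (Finset.sdiff_subset)
          have h2 : (Finset.Icc 1 N).card = N := by rw [Nat.card_Icc]; omega
          exact_mod_cast h1.trans_eq h2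
        nlinarith
      -- assemble
      have hkey : gradResc N χ α (fun j => Y j τ) i - gradRescK N χ α l k (fun j => Y j τ) i
          = ((if i < N then 1 / (Y (i+1) τ - Y i τ) else 0)
              - (if i < l + k - 1 then 1 / (Y (i+1) τ - Y i τ) else 0))
            - ((if 1 < i then 1 / (Y i τ - Y (i-1) τ) else 0)
              - (if l < i then 1 / (Y i τ - Y (i-1) τ) else 0))
            - 2 * χ * hN N * ∑ j ∈ Finset.Icc 1 N \ Finset.Icc l (l + k - 1), 1 / (Y j τ - Y i τ) := by
        rw [gradResc, gradRescK, hsum]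
        ring
      rw [hkey]
      have habs : |2 * χ * hN N * ∑ j ∈ Finset.Icc 1 N \ Finset.Icc l (l + k - 1), 1 / (Y j τ - Y i τ)|
          ≤ 2*χ*hN N*((N:ℝ)*ε) := by
        rw [abs_mul, abs_of_pos (by positivity : (0:ℝ) < 2*χ*hN N)]
        exact mul_le_mul_of_nonneg_left hd3 (by positivity)
      have h1 := abs_sub (((if i < N then 1 / (Y (i+1) τ - Y i τ) else 0)
              - (if i < l + k - 1 then 1 / (Y (i+1) τ - Y i τ) else 0))
            - ((if 1 < i then 1 / (Y i τ - Y (i-1) τ) else 0)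
              - (if l < i then 1 / (Y i τ - Y (i-1) τ) else 0)))
            (2 * χ * hN N * ∑ j ∈ Finset.Icc 1 N \ Finset.Icc l (l + k - 1), 1 / (Y j τ - Y i τ))
      have h2 := abs_sub ((if i < N then 1 / (Y (i+1) τ - Y i τ) else 0)
              - (if i < l + k - 1 then 1 / (Y (i+1) τ - Y i τ) else 0))
            ((if 1 < i then 1 / (Y i τ - Y (i-1) τ) else 0)
              - (if l < i then 1 / (Y i τ - Y (i-1) τ) else 0))
      have hfin : (2*A + 2*χ*hN N*(N:ℝ)*A) * Real.exp (-α * τ)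
          = ε + ε + 2*χ*hN N*((N:ℝ)*ε) := by rw [hεdef]; ring
      rw [hfin]
      linarith

  set C1 : ℝ := 2*A + 2*χ*hN N*(N:ℝ)*A with hC1def
  have hC1pos : 0 < C1 := by rw [hC1def]; positivity
  have hEderiv : ∀ τ : ℝ, 0 ≤ τ →
      HasDerivAt (fun σ => ErescK N χ α l k (fun i => Y i σ))
        (∑ i ∈ Finset.Icc l (l + k - 1), gradRescK N χ α l k (fun j => Y j τ) i *
          (-(gradResc N χ α (fun j => Y j τ) i))) τ := by
      intro τ hτ
      set v : ℕ → ℝ := fun i => -(gradResc N χ α (fun j => Y j τ) i) with hv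
      have hYd : ∀ i ∈ Finset.Icc 1 N, HasDerivAt (Y i) (v i) τ := fun i hi => hode i hi τ hτ
      have h1 : HasDerivAt (fun σ => ∑ i ∈ Finset.Icc l (l + k - 2), Real.log (Y (i+1) σ - Y i σ))
          (∑ i ∈ Finset.Icc l (l + k - 2), (v (i+1) - v i) / (Y (i+1) τ - Y i τ)) τ := by
        apply HasDerivAt.fun_sum
        intro i hi
        rw [Finset.mem_Icc] at hi
        have hgap : Y (i+1) τ - Y i τ ≠ 0 :=
          ne_of_gt (lt_of_lt_of_le (by positivity) (hR3 τ hτ i (by omega) (by omega)))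
        exact ((hYd (i+1) (by rw [Finset.mem_Icc]; omega)).sub
          (hYd i (by rw [Finset.mem_Icc]; omega))).log hgap
      have h2 : HasDerivAt (fun σ => ∑ i ∈ Finset.Icc l (l + k - 1),
            ∑ j ∈ (Finset.Icc l (l + k - 1)).erase i, Real.log |Y i σ - Y j σ|)
          (∑ i ∈ Finset.Icc l (l + k - 1), ∑ j ∈ (Finset.Icc l (l + k - 1)).erase i,
            (v i - v j) / (Y i τ - Y j τ)) τ := by
        have heq : (fun σ => ∑ i ∈ Finset.Icc l (l + k - 1),
              ∑ j ∈ (Finset.Icc l (l + k - 1)).erase i, Real.log |Y i σ - Y j σ|)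
            = fun σ => ∑ i ∈ Finset.Icc l (l + k - 1),
              ∑ j ∈ (Finset.Icc l (l + k - 1)).erase i, Real.log (Y i σ - Y j σ) := by
          funext σ
          exact Finset.sum_congr rfl fun i _ => Finset.sum_congr rfl fun j _ => Real.log_abs _
        rw [heq]
        apply HasDerivAt.fun_sum
        intro i hi
        apply HasDerivAt.fun_sum
        intro j hj
        obtain ⟨hji, hjI⟩ := Finset.mem_erase.mp hj
        have hne : Y i τ - Y j τ ≠ 0 := by
          intro h
          have := hR6 τ hτ i (hIsub hi) j (hIsub hjI) (Ne.symm hji)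
          rw [h, abs_zero] at this
          have : (0:ℝ) < 1 / A := by positivity
          linarith
        exact ((hYd i (hIsub hi)).sub (hYd j (hIsub hjI))).log hne
      have h3 : HasDerivAt (fun σ => ∑ i ∈ Finset.Icc l (l + k - 1), (Y i σ)^2)
          (∑ i ∈ Finset.Icc l (l + k - 1), 2 * Y i τ * v i) τ := by
        apply HasDerivAt.fun_sum
        intro i hi
        have := (hYd i (hIsub hi)).pow 2
        norm_num at this
        exact this
      have hcomb := ((h1.neg).add (h2.const_mul (χ * hN N))).sub (h3.const_mul (α/2))
      rw [grad_identity N k l hk hl χ α (fun j => Y j τ) v]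
      exact hcomb

  have hElb : ∀ τ : ℝ, 0 ≤ τ →
      -(((k:ℝ)-1) * Real.log (2*A)) + χ*hN N*((k:ℝ)*(((k:ℝ)-1)*Real.log (1/A)))
          - α/2*((k:ℝ)*A^2)
        ≤ ErescK N χ α l k (fun i => Y i τ) := by
      intro τ hτ
      have hcard1 : (Finset.Icc l (l + k - 2)).card = k - 1 := by rw [Nat.card_Icc]; omega
      have hcard2 : (Finset.Icc l (l + k - 1)).card = k := by rw [Nat.card_Icc]; omega
      have hS1 : ∑ i ∈ Finset.Icc l (l + k - 2), Real.log (Y (i+1) τ - Y i τ)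
          ≤ ((k:ℝ)-1) * Real.log (2*A) := by
        have hbd : ∀ i ∈ Finset.Icc l (l + k - 2), Real.log (Y (i+1) τ - Y i τ) ≤ Real.log (2*A) := by
          intro i hi
          rw [Finset.mem_Icc] at hi
          have hiI : i ∈ Finset.Icc l (l + k - 1) := by rw [Finset.mem_Icc]; omega
          have hi1I : i + 1 ∈ Finset.Icc l (l + k - 1) := by rw [Finset.mem_Icc]; omega
          have h1 := hR2 τ hτ i hiI
          have h2 := hR2 τ hτ (i+1) hi1I
          have hgap : Y (i+1) τ - Y i τ ≤ 2*A := by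
            have := abs_le.mp h1
            have := abs_le.mp h2
            linarith [this.2]
          exact Real.log_le_log (lt_of_lt_of_le (by positivity) (hR3 τ hτ i (by omega) (by omega))) hgap
        refine le_trans (Finset.sum_le_sum hbd) ?_
        rw [Finset.sum_const, nsmul_eq_mul, hcard1]
        have : ((k - 1 : ℕ) : ℝ) = (k:ℝ) - 1 := by
          have : (1:ℕ) ≤ k := by omega
          push_cast [Nat.cast_sub this]
          ring
        rw [this]
      have hS2 : (k:ℝ)*(((k:ℝ)-1)*Real.log (1/A))
          ≤ ∑ i ∈ Finset.Icc l (l + k - 1), ∑ j ∈ (Finset.Icc l (l + k - 1)).erase i,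
              Real.log |Y i τ - Y j τ| := by
        have hbd : ∀ i ∈ Finset.Icc l (l + k - 1),
            ((k:ℝ)-1)*Real.log (1/A) ≤ ∑ j ∈ (Finset.Icc l (l + k - 1)).erase i,
              Real.log |Y i τ - Y j τ| := by
          intro i hi
          have hbd2 : ∀ j ∈ (Finset.Icc l (l + k - 1)).erase i,
              Real.log (1/A) ≤ Real.log |Y i τ - Y j τ| := by
            intro j hj
            obtain ⟨hji, hjI⟩ := Finset.mem_erase.mp hj
            exact Real.log_le_log (by positivity) (hR6 τ hτ i (hIsub hi) j (hIsub hjI) (Ne.symm hji))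
          have := Finset.card_nsmul_le_sum _ _ _ hbd2
          rw [Finset.card_erase_of_mem hi, hcard2, nsmul_eq_mul] at this
          have hc : ((k - 1 : ℕ) : ℝ) = (k:ℝ) - 1 := by
            have h1 : (1:ℕ) ≤ k := by omega
            push_cast [Nat.cast_sub h1]
            ring
          rw [hc] at this
          exact this
        have := Finset.card_nsmul_le_sum _ _ _ hbd
        rw [hcard2, nsmul_eq_mul] at this
        exact this
      have hS3 : ∑ i ∈ Finset.Icc l (l + k - 1), (Y i τ)^2 ≤ (k:ℝ)*A^2 := by
        have hbd : ∀ i ∈ Finset.Icc l (l + k - 1), (Y i τ)^2 ≤ A^2 := by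
          intro i hi
          have := hR2 τ hτ i hi
          nlinarith [abs_nonneg (Y i τ), sq_abs (Y i τ)]
        refine le_trans (Finset.sum_le_sum hbd) ?_
        rw [Finset.sum_const, nsmul_eq_mul, hcard2]
      rw [ErescK]
      have h2' := mul_le_mul_of_nonneg_left hS2 (by positivity : (0:ℝ) ≤ χ * hN N)
      have h3' := mul_le_mul_of_nonneg_left hS3 (by positivity : (0:ℝ) ≤ α/2)
      linarith

  set m0 : ℝ := -(((k:ℝ)-1) * Real.log (2*A)) + χ*hN N*((k:ℝ)*(((k:ℝ)-1)*Real.log (1/A)))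
    - α/2*((k:ℝ)*A^2) with hm0def
  -- bound on the full gradient
  have hpbound : ∀ τ : ℝ, 0 ≤ τ → ∀ i ∈ Finset.Icc l (l + k - 1),
      |gradResc N χ α (fun j => Y j τ) i| ≤ B + C1 := by
    intro τ hτ i hi
    have h1 := hB τ hτ i hi
    have h2 := hC1 τ hτ i hi
    have hexp : Real.exp (-α * τ) ≤ 1 := by
      rw [Real.exp_le_one_iff]
      nlinarith
    have h3 : C1 * Real.exp (-α * τ) ≤ C1 := by nlinarith
    calc |gradResc N χ α (fun j => Y j τ) i|
        ≤ |gradRescK N χ α l k (fun j => Y j τ) i|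
          + |gradResc N χ α (fun j => Y j τ) i - gradRescK N χ α l k (fun j => Y j τ) i| := by
          have := abs_add_le (gradRescK N χ α l k (fun j => Y j τ) i)
            (gradResc N χ α (fun j => Y j τ) i - gradRescK N χ α l k (fun j => Y j τ) i)
          simpa using this
      _ ≤ B + C1 := by linarith
  -- Lipschitz bound for each particle
  have hYlip : ∀ i ∈ Finset.Icc l (l + k - 1), ∀ σ ∈ Set.Ici (0:ℝ), ∀ τ ∈ Set.Ici (0:ℝ),
      |Y i σ - Y i τ| ≤ (B + C1) * |σ - τ| := by
    intro i hi σ hσ τ hτ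
    have := Convex.norm_image_sub_le_of_norm_hasDerivWithin_le
      (f := Y i) (f' := fun x => -(gradResc N χ α (fun j => Y j x) i)) (s := Set.Ici (0:ℝ))
      (fun x hx => (hode i (hIsub hi) x hx).hasDerivWithinAt)
      (fun x hx => by
        rw [Real.norm_eq_abs, abs_neg]
        exact hpbound x hx i hi)
      (convex_Ici 0) hτ hσ
    simpa [Real.norm_eq_abs] using this
  -- Lipschitz bound for reciprocals of differences within I
  have hinvlip : ∀ a ∈ Finset.Icc l (l + k - 1), ∀ b ∈ Finset.Icc l (l + k - 1), a ≠ b →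
      ∀ σ ∈ Set.Ici (0:ℝ), ∀ τ ∈ Set.Ici (0:ℝ),
      |1 / (Y a σ - Y b σ) - 1 / (Y a τ - Y b τ)| ≤ A^2 * (2*(B + C1)) * |σ - τ| := by
    intro a ha b hb hab σ hσ τ hτ
    have h1 := hR6 σ hσ a (hIsub ha) b (hIsub hb) hab
    have h2 := hR6 τ hτ a (hIsub ha) b (hIsub hb) hab
    have key := one_div_diff_lip (by positivity : (0:ℝ) < 1/A) h1 h2
    have hm2 : 1 / ((1:ℝ)/A)^2 = A^2 := by field_simp
    rw [hm2] at key
    refine le_trans key ?_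
    have h3 : |(Y a σ - Y b σ) - (Y a τ - Y b τ)| ≤ 2*(B + C1)*|σ - τ| := by
      have h4 := hYlip a ha σ hσ τ hτ
      have h5 := hYlip b hb σ hσ τ hτ
      calc |(Y a σ - Y b σ) - (Y a τ - Y b τ)|
          = |(Y a σ - Y a τ) - (Y b σ - Y b τ)| := by ring_nf
        _ ≤ |Y a σ - Y a τ| + |Y b σ - Y b τ| := abs_sub _ _
        _ ≤ 2*(B + C1)*|σ - τ| := by linarith
    calc A^2 * |(Y a σ - Y b σ) - (Y a τ - Y b τ)| ≤ A^2 * (2*(B + C1)*|σ - τ|) := by nlinarith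
      _ = A^2 * (2*(B + C1)) * |σ - τ| := by ring
  
  set B' : ℝ := B + C1 with hB'def
  have hB'pos : 0 < B' := by rw [hB'def]; positivity
  set L1 : ℝ := A^2 * (2*B') with hL1def
  have hL1pos : 0 < L1 := by rw [hL1def]; positivity
  have hqlip : ∀ i ∈ Finset.Icc l (l + k - 1), ∀ σ ∈ Set.Ici (0:ℝ), ∀ τ ∈ Set.Ici (0:ℝ),
      |gradRescK N χ α l k (fun j => Y j σ) i - gradRescK N χ α l k (fun j => Y j τ) i|
        ≤ (2*L1 + 2*χ*hN N*(k:ℝ)*L1 + α*B') * |σ - τ| := by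
      intro i hi σ hσ τ hτ
      have hmem := Finset.mem_Icc.mp hi
      have habsn : (0:ℝ) ≤ |σ - τ| := abs_nonneg _
      have ht1 : |(if i < l + k - 1 then 1 / (Y (i+1) σ - Y i σ) else 0)
          - (if i < l + k - 1 then 1 / (Y (i+1) τ - Y i τ) else 0)| ≤ L1 * |σ - τ| := by
        by_cases h : i < l + k - 1
        · rw [if_pos h, if_pos h]
          exact hinvlip (i+1) (by rw [Finset.mem_Icc]; omega) i hi (by omega) σ hσ τ hτ
        · rw [if_neg h, if_neg h, sub_self, abs_zero]; positivity
      have ht2 : |(if l < i then 1 / (Y i σ - Y (i-1) σ) else 0)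
          - (if l < i then 1 / (Y i τ - Y (i-1) τ) else 0)| ≤ L1 * |σ - τ| := by
        by_cases h : l < i
        · rw [if_pos h, if_pos h]
          exact hinvlip i hi (i-1) (by rw [Finset.mem_Icc]; omega) (by omega) σ hσ τ hτ
        · rw [if_neg h, if_neg h, sub_self, abs_zero]; positivity
      have ht3 : |∑ j ∈ (Finset.Icc l (l + k - 1)).erase i, 1 / (Y j σ - Y i σ)
          - ∑ j ∈ (Finset.Icc l (l + k - 1)).erase i, 1 / (Y j τ - Y i τ)|
          ≤ (k:ℝ) * L1 * |σ - τ| := by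
        rw [← Finset.sum_sub_distrib]
        refine le_trans (Finset.abs_sum_le_sum_abs _ _) ?_
        have hbd : ∀ j ∈ (Finset.Icc l (l + k - 1)).erase i,
            |1 / (Y j σ - Y i σ) - 1 / (Y j τ - Y i τ)| ≤ L1 * |σ - τ| := by
          intro j hj
          obtain ⟨hji, hjI⟩ := Finset.mem_erase.mp hj
          exact hinvlip j hjI i hi hji σ hσ τ hτ
        refine le_trans (Finset.sum_le_sum hbd) ?_
        rw [Finset.sum_const, nsmul_eq_mul]
        have hcard : (((Finset.Icc l (l + k - 1)).erase i).card : ℝ) ≤ (k:ℝ) := by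
          have h1 : ((Finset.Icc l (l + k - 1)).erase i).card ≤ (Finset.Icc l (l + k - 1)).card :=
            Finset.card_le_card (Finset.erase_subset _ _)
          have h2 : (Finset.Icc l (l + k - 1)).card = k := by rw [Nat.card_Icc]; omega
          exact_mod_cast h1.trans_eq h2
        calc (((Finset.Icc l (l + k - 1)).erase i).card : ℝ) * (L1 * |σ - τ|)
            ≤ (k:ℝ) * (L1 * |σ - τ|) := mul_le_mul_of_nonneg_right hcard (by positivity)
          _ = (k:ℝ) * L1 * |σ - τ| := by ring
      have ht4 : |α * Y i σ - α * Y i τ| ≤ α * B' * |σ - τ| := by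
        rw [← mul_sub, abs_mul, abs_of_pos hαpos, mul_assoc]
        exact mul_le_mul_of_nonneg_left (hYlip i hi σ hσ τ hτ) hαpos.le
      have hkey : gradRescK N χ α l k (fun j => Y j σ) i - gradRescK N χ α l k (fun j => Y j τ) i
          = ((if i < l + k - 1 then 1 / (Y (i+1) σ - Y i σ) else 0)
              - (if i < l + k - 1 then 1 / (Y (i+1) τ - Y i τ) else 0))
            - ((if l < i then 1 / (Y i σ - Y (i-1) σ) else 0)
              - (if l < i then 1 / (Y i τ - Y (i-1) τ) else 0))
            - 2 * χ * hN N * (∑ j ∈ (Finset.Icc l (l + k - 1)).erase i, 1 / (Y j σ - Y i σ)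
              - ∑ j ∈ (Finset.Icc l (l + k - 1)).erase i, 1 / (Y j τ - Y i τ))
            - (α * Y i σ - α * Y i τ) := by
        rw [gradRescK, gradRescK]
        ring
      rw [hkey]
      have habs3 : |2 * χ * hN N * (∑ j ∈ (Finset.Icc l (l + k - 1)).erase i, 1 / (Y j σ - Y i σ)
          - ∑ j ∈ (Finset.Icc l (l + k - 1)).erase i, 1 / (Y j τ - Y i τ))|
          ≤ 2*χ*hN N*((k:ℝ) * L1 * |σ - τ|) := by
        rw [abs_mul, abs_of_pos (by positivity : (0:ℝ) < 2*χ*hN N)]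
        exact mul_le_mul_of_nonneg_left ht3 (by positivity)
      set a1 := (if i < l + k - 1 then 1 / (Y (i+1) σ - Y i σ) else 0)
        - (if i < l + k - 1 then 1 / (Y (i+1) τ - Y i τ) else 0)
      set a2 := (if l < i then 1 / (Y i σ - Y (i-1) σ) else 0)
        - (if l < i then 1 / (Y i τ - Y (i-1) τ) else 0)
      set a3 := 2 * χ * hN N * (∑ j ∈ (Finset.Icc l (l + k - 1)).erase i, 1 / (Y j σ - Y i σ)
        - ∑ j ∈ (Finset.Icc l (l + k - 1)).erase i, 1 / (Y j τ - Y i τ))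
      set a4 := α * Y i σ - α * Y i τ
      have h1 := abs_sub (a1 - a2 - a3) a4
      have h2 := abs_sub (a1 - a2) a3
      have h3 := abs_sub a1 a2
      have hfin : (2*L1 + 2*χ*hN N*(k:ℝ)*L1 + α*B') * |σ - τ|
          = L1*|σ-τ| + L1*|σ-τ| + 2*χ*hN N*((k:ℝ)*L1*|σ-τ|) + α*B'*|σ-τ| := by ring
      rw [hfin]
      linarith

  set Lq : ℝ := 2*L1 + 2*χ*hN N*(k:ℝ)*L1 + α*B' with hLqdef
  have hLqpos : 0 < Lq := by rw [hLqdef]; positivity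
  have hkR : (0:ℝ) < (k:ℝ) := by
    have : (0:ℕ) < k := by omega
    exact_mod_cast this
  have hcard2 : (Finset.Icc l (l + k - 1)).card = k := by rw [Nat.card_Icc]; omega
  -- notation
  set G : ℝ → ℝ := fun τ => ∑ i ∈ Finset.Icc l (l + k - 1),
    (gradRescK N χ α l k (fun j => Y j τ) i) ^ 2 with hGdef
  set E : ℝ → ℝ := fun τ => ErescK N χ α l k (fun i => Y i τ) with hEdef
  have hG0 : ∀ τ, 0 ≤ G τ := fun τ => Finset.sum_nonneg fun i _ => sq_nonneg _
  -- Lipschitz property of G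
  have hGlip : ∀ σ ∈ Set.Ici (0:ℝ), ∀ τ ∈ Set.Ici (0:ℝ),
      |G σ - G τ| ≤ (k:ℝ) * (2*B*Lq) * |σ - τ| := by
    intro σ hσ τ hτ
    rw [hGdef]
    simp only
    rw [← Finset.sum_sub_distrib]
    refine le_trans (Finset.abs_sum_le_sum_abs _ _) ?_
    have hbd : ∀ i ∈ Finset.Icc l (l + k - 1),
        |(gradRescK N χ α l k (fun j => Y j σ) i)^2 - (gradRescK N χ α l k (fun j => Y j τ) i)^2|
          ≤ 2*B*Lq*|σ - τ| := by
      intro i hi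
      have hq1 := hqlip i hi σ hσ τ hτ
      have hsum : |gradRescK N χ α l k (fun j => Y j σ) i + gradRescK N χ α l k (fun j => Y j τ) i|
          ≤ 2*B := by
        refine le_trans (abs_add_le _ _) ?_
        have := hB σ hσ i hi
        have := hB τ hτ i hi
        linarith
      have hfact : (gradRescK N χ α l k (fun j => Y j σ) i)^2
            - (gradRescK N χ α l k (fun j => Y j τ) i)^2
          = (gradRescK N χ α l k (fun j => Y j σ) i - gradRescK N χ α l k (fun j => Y j τ) i)
            * (gradRescK N χ α l k (fun j => Y j σ) i + gradRescK N χ α l k (fun j => Y j τ) i) := by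
        ring
      rw [hfact, abs_mul]
      calc |gradRescK N χ α l k (fun j => Y j σ) i - gradRescK N χ α l k (fun j => Y j τ) i|
            * |gradRescK N χ α l k (fun j => Y j σ) i + gradRescK N χ α l k (fun j => Y j τ) i|
          ≤ (Lq * |σ - τ|) * (2*B) :=
            mul_le_mul hq1 hsum (abs_nonneg _) (by positivity)
        _ = 2*B*Lq*|σ - τ| := by ring
    refine le_trans (Finset.sum_le_sum hbd) ?_
    rw [Finset.sum_const, nsmul_eq_mul, hcard2]
    calc (k:ℝ) * (2*B*Lq*|σ - τ|) = (k:ℝ) * (2*B*Lq) * |σ - τ| := by ring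
      _ ≤ _ := le_refl _
  -- energy dissipation bound
  have hEp : ∀ τ : ℝ, 0 ≤ τ →
      (∑ i ∈ Finset.Icc l (l + k - 1), gradRescK N χ α l k (fun j => Y j τ) i *
        (-(gradResc N χ α (fun j => Y j τ) i)))
      ≤ -(G τ) + (k:ℝ)*B*C1 * Real.exp (-α * τ) := by
    intro τ hτ
    have hsplit : ∀ i ∈ Finset.Icc l (l + k - 1),
        gradRescK N χ α l k (fun j => Y j τ) i * (-(gradResc N χ α (fun j => Y j τ) i))
          = -((gradRescK N χ α l k (fun j => Y j τ) i)^2)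
            - gradRescK N χ α l k (fun j => Y j τ) i *
              (gradResc N χ α (fun j => Y j τ) i - gradRescK N χ α l k (fun j => Y j τ) i) := by
      intro i _
      ring
    rw [Finset.sum_congr rfl hsplit, Finset.sum_sub_distrib, Finset.sum_neg_distrib]
    have hR : |∑ i ∈ Finset.Icc l (l + k - 1), gradRescK N χ α l k (fun j => Y j τ) i *
        (gradResc N χ α (fun j => Y j τ) i - gradRescK N χ α l k (fun j => Y j τ) i)|
        ≤ (k:ℝ)*B*C1 * Real.exp (-α * τ) := by
      refine le_trans (Finset.abs_sum_le_sum_abs _ _) ?_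
      have hbd : ∀ i ∈ Finset.Icc l (l + k - 1),
          |gradRescK N χ α l k (fun j => Y j τ) i *
            (gradResc N χ α (fun j => Y j τ) i - gradRescK N χ α l k (fun j => Y j τ) i)|
          ≤ B * (C1 * Real.exp (-α * τ)) := by
        intro i hi
        rw [abs_mul]
        exact mul_le_mul (hB τ hτ i hi) (hC1 τ hτ i hi) (abs_nonneg _) hBpos.le
      refine le_trans (Finset.sum_le_sum hbd) ?_
      rw [Finset.sum_const, nsmul_eq_mul, hcard2]
      calc (k:ℝ) * (B * (C1 * Real.exp (-α * τ))) = (k:ℝ)*B*C1 * Real.exp (-α * τ) := by ring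
        _ ≤ _ := le_refl _
    have := abs_le.mp hR
    have hGτ : G τ = ∑ i ∈ Finset.Icc l (l + k - 1),
        (gradRescK N χ α l k (fun j => Y j τ) i)^2 := rfl
    linarith [this.2]
  -- the Lyapunov function
  set Cq : ℝ := (k:ℝ)*B*C1 with hCqdef
  have hCqpos : 0 < Cq := by rw [hCqdef]; positivity
  set Φ : ℝ → ℝ := fun τ => E τ + Cq/α * Real.exp (-α*τ) with hΦdef
  have hΦd : ∀ τ : ℝ, 0 ≤ τ → HasDerivAt Φ
      ((∑ i ∈ Finset.Icc l (l + k - 1), gradRescK N χ α l k (fun j => Y j τ) i *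
        (-(gradResc N χ α (fun j => Y j τ) i))) - Cq * Real.exp (-α*τ)) τ := by
    intro τ hτ
    have hexp : HasDerivAt (fun x => Real.exp (-α*x)) (-α * Real.exp (-α*τ)) τ := by
      have h : HasDerivAt (fun x : ℝ => -α * x) (-α) τ := by
        simpa using (hasDerivAt_id τ).const_mul (-α)
      simpa [mul_comm] using h.exp
    have hsum := (hEderiv τ hτ).add (hexp.const_mul (Cq/α))
    have heq : (∑ i ∈ Finset.Icc l (l + k - 1), gradRescK N χ α l k (fun j => Y j τ) i *
          (-(gradResc N χ α (fun j => Y j τ) i))) - Cq * Real.exp (-α*τ)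
        = (∑ i ∈ Finset.Icc l (l + k - 1), gradRescK N χ α l k (fun j => Y j τ) i *
          (-(gradResc N χ α (fun j => Y j τ) i))) + Cq/α * (-α * Real.exp (-α*τ)) := by
      field_simp
      ring
    rw [heq]
    exact hsum
  have hΦlb : ∀ τ ∈ Set.Ici (0:ℝ), m0 ≤ Φ τ := by
    intro τ hτ
    have h1 := hElb τ hτ
    have h2 : 0 ≤ Cq/α * Real.exp (-α*τ) := by positivity
    rw [hΦdef, hEdef]
    exact le_trans h1 (le_add_of_nonneg_right h2)
  have hΦdec : ∀ c : ℝ, 0 ≤ c → ∀ a ∈ Set.Ici (0:ℝ), ∀ b ∈ Set.Ici (0:ℝ), a ≤ b →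
      (∀ x ∈ Set.Icc a b, c ≤ G x) → Φ b + c * b ≤ Φ a + c * a := by
    intro c hc a ha b hb hab hGc
    have hanti := antitoneOn_of_hasDerivAt_nonpos (f := fun τ => Φ τ + c * τ)
      (f' := fun τ => ((∑ i ∈ Finset.Icc l (l + k - 1), gradRescK N χ α l k (fun j => Y j τ) i *
        (-(gradResc N χ α (fun j => Y j τ) i))) - Cq * Real.exp (-α*τ)) + c)
      (convex_Icc a b)
      (fun x hx => by
        have hx0 : (0:ℝ) ≤ x := le_trans ha hx.1
        have hc' : HasDerivAt (fun τ : ℝ => c * τ) c x := by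
          simpa using (hasDerivAt_id x).const_mul c
        exact (hΦd x hx0).add hc')
      (fun x hx => by
        have hx0 : (0:ℝ) ≤ x := le_trans ha hx.1
        have h1 := hEp x hx0
        have h2 := hGc x hx
        beta_reduce
        linarith)
    have := hanti (Set.left_mem_Icc.mpr hab) (Set.right_mem_Icc.mpr hab) hab
    simpa using this
  -- limit of G
  have hGtend : Tendsto G atTop (nhds 0) :=
    barbalat (L := (k:ℝ) * (2*B*Lq)) (by positivity) hG0 hGlip hΦlb hΦdec
  have hsqrt : Tendsto (fun τ => Real.sqrt (G τ)) atTop (nhds 0) := by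
    have := hGtend.sqrt
    simpa using this
  have hexp0 : Tendsto (fun τ => Real.exp (-α*τ)) atTop (nhds 0) := by
    apply Real.tendsto_exp_atBot.comp
    exact Tendsto.const_mul_atTop_of_neg (by linarith : -α < 0) tendsto_id
  refine ⟨?_, ?_, ?_⟩
  · -- part (i)
    intro i hi
    have hq0 : Tendsto (fun τ => gradRescK N χ α l k (fun j => Y j τ) i) atTop (nhds 0) := by
      apply squeeze_zero_norm' (a := fun τ => Real.sqrt (G τ))
      · filter_upwards [eventually_ge_atTop (0:ℝ)] with τ hτ
        rw [Real.norm_eq_abs, ← Real.sqrt_sq_eq_abs]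
        apply Real.sqrt_le_sqrt
        exact Finset.single_le_sum
          (f := fun i' => (gradRescK N χ α l k (fun j => Y j τ) i')^2)
          (fun i' _ => sq_nonneg _) hi
      · exact hsqrt
    have hd0 : Tendsto (fun τ => gradResc N χ α (fun j => Y j τ) i
        - gradRescK N χ α l k (fun j => Y j τ) i) atTop (nhds 0) := by
      apply squeeze_zero_norm' (a := fun τ => C1 * Real.exp (-α*τ))
      · filter_upwards [eventually_ge_atTop (0:ℝ)] with τ hτ
        exact hC1 τ hτ i hi
      · simpa using hexp0.const_mul C1
    have hp0 : Tendsto (fun τ => -(gradResc N χ α (fun j => Y j τ) i)) atTop (nhds 0) := by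
      have h1 := (hq0.add hd0).neg
      have h2 : (fun τ => -(gradRescK N χ α l k (fun j => Y j τ) i
          + (gradResc N χ α (fun j => Y j τ) i - gradRescK N χ α l k (fun j => Y j τ) i)))
          = fun τ => -(gradResc N χ α (fun j => Y j τ) i) := by
        funext τ; ring
      rw [h2] at h1
      simpa using h1
    apply hp0.congr'
    filter_upwards [eventually_ge_atTop (0:ℝ)] with τ hτ
    exact ((hode i (hIsub hi) τ hτ).deriv).symm
  · -- part (ii)
    set Φm : ℝ → ℝ := fun τ => Φ (max τ 0) with hΦm
    have hΦanti : ∀ a ∈ Set.Ici (0:ℝ), ∀ b ∈ Set.Ici (0:ℝ), a ≤ b → Φ b ≤ Φ a := by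
      intro a ha b hb hab
      have := hΦdec 0 le_rfl a ha b hb hab (fun x _ => hG0 x)
      simpa using this
    have hanti : Antitone Φm := by
      intro a b hab
      exact hΦanti (max a 0) (Set.mem_Ici.mpr (le_max_right _ _)) (max b 0) (Set.mem_Ici.mpr (le_max_right _ _))
        (max_le_max hab le_rfl)
    have hbdd : BddBelow (Set.range Φm) := by
      refine ⟨m0, ?_⟩
      rintro x ⟨τ, rfl⟩
      exact hΦlb _ (Set.mem_Ici.mpr (le_max_right _ _))
    have h1 : Tendsto Φm atTop (nhds (⨅ n, Φm n)) := tendsto_atTop_ciInf hanti hbdd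
    have h2 : Tendsto Φ atTop (nhds (⨅ n, Φm n)) := by
      apply h1.congr'
      filter_upwards [eventually_ge_atTop (0:ℝ)] with τ hτ
      rw [hΦm]
      simp only
      rw [max_eq_left hτ]
    have h3 : Tendsto (fun τ => Φ τ - Cq/α * Real.exp (-α*τ)) atTop
        (nhds ((⨅ n, Φm n) - 0)) := h2.sub (by simpa using hexp0.const_mul (Cq/α))
    refine ⟨(⨅ n, Φm n) - 0, ?_⟩
    apply h3.congr
    intro τ
    rw [hΦdef, hEdef]
    ring
  · exact hsqrt
end
end

section
/- (Three particles, two collapse.) Assume χ > 2 and set ᾱ = 2(χ/2 − 1) = χ − 2. Let (u₁,u₂) be a solution of the three-particle relative-distance system on its maximal interval [0,T) with T < ∞ and u₂(0) > u₁(0) > 0, and suppose liminf_{t→T⁻} u₁(t) = 0. Then: (i) u₂ − u₁ is nondecreasing on [0,T), and hence u₂(t) ≥ u₂(0) − u₁(0) > 0 for all t; (ii) d/dt (u₁(t)²) ≤ −ᾱ for all t, and lim_{t→T⁻} u₁(t) = 0; (iii) u₁(t)² / (2ᾱ(T−t)) → 1 as t → T⁻; equivalently, the rescaled variable v₁ =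 u₁/√(2ᾱ(T−t)) tends to 1, while v₂ = u₂/√(2ᾱ(T−t)) satisfies v₂(τ) ≥ (1/(A√(2ᾱT))) e^{ᾱτ} for some A > 0, where τ(t) = −(1/ᾱ) log(√(2ᾱ(T−t))/√(2ᾱT)). -/
open Filter

noncomputable section

/-- A solution of the three-particle relative-distance system on `[0,T)`:
`u₁ = X₂ - X₁ > 0`, `u₂ = X₃ - X₂ > 0`, with `2χh₃ = χ/2`. -/
structure Is3Sol (χ T : ℝ) (u₁ u₂ : ℝ → ℝ) : Prop where
  pos : ∀ t ∈ Set.Ico (0 : ℝ) T, 0 < u₁ t ∧ 0 < u₂ t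
  ode1 : ∀ t ∈ Set.Ico (0 : ℝ) T,
    HasDerivAt u₁
      (2 / u₁ t - 1 / u₂ t - (χ / 2) * (2 / u₁ t - 1 / u₂ t + 1 / (u₁ t + u₂ t))) t
  ode2 : ∀ t ∈ Set.Ico (0 : ℝ) T,
    HasDerivAt u₂
      (2 / u₂ t - 1 / u₁ t - (χ / 2) * (2 / u₂ t - 1 / u₁ t + 1 / (u₁ t + u₂ t))) t

/-- A solution on its maximal interval of existence `[0,T)`. -/
def Is3MaxSol (χ T : ℝ) (u₁ u₂ : ℝ → ℝ) : Prop :=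
  Is3Sol χ T u₁ u₂ ∧
    ∀ T' > T, ∀ v₁ v₂ : ℝ → ℝ,
      (∀ t ∈ Set.Ico (0 : ℝ) T, v₁ t = u₁ t ∧ v₂ t = u₂ t) → ¬ Is3Sol χ T' v₁ v₂

lemma stmt19_aux1 (a L : ℝ) (ha : a ≠ 0) : a * (-(1 / a) * L) = -L := by
  field_simp

lemma stmt19_aux2 (c y x : ℝ) (hc : c ≠ 0) (hy : y ≠ 0) (hx : x ≠ 0) :
    1 / ((1 / c) * y) * (y / x) = c / x := by
  field_simp

/-- Three particles, two collapse: for `χ > 2`, `ᾱ = χ - 2`, a maximal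
solution with `u₂(0) > u₁(0) > 0` and `liminf_{t→T⁻} u₁ = 0`:
(i) `u₂ - u₁` is nondecreasing, hence `u₂(t) ≥ u₂(0) - u₁(0)`;
(ii) `d/dt(u₁²) ≤ -ᾱ` and `u₁(t) → 0` as `t → T⁻`;
(iii) `u₁(t)²/(2ᾱ(T-t)) → 1`, i.e. the rescaled `v₁ → 1`, while
`v₂ = u₂/√(2ᾱ(T-t)) ≥ (1/(A√(2ᾱT))) e^{ᾱτ(t)}` for some `A > 0`, where
`τ(t) = -(1/ᾱ) log(√(2ᾱ(T-t))/√(2ᾱT))`. -/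
theorem stmt19 (χ T : ℝ) (hχ : 2 < χ) (hT : 0 < T)
    (ab : ℝ) (hab : ab = χ - 2)
    (u₁ u₂ : ℝ → ℝ) (h : Is3MaxSol χ T u₁ u₂)
    (h0 : u₁ 0 < u₂ 0)
    (hbu : Filter.liminf u₁ (nhdsWithin T (Set.Iio T)) = 0) :
    (MonotoneOn (fun t => u₂ t - u₁ t) (Set.Ico (0 : ℝ) T) ∧
        ∀ t ∈ Set.Ico (0 : ℝ) T, u₂ 0 - u₁ 0 ≤ u₂ t) ∧
      ((∀ t ∈ Set.Ico (0 : ℝ) T, deriv (fun s => (u₁ s) ^ 2) t ≤ -ab) ∧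
        Filter.Tendsto u₁ (nhdsWithin T (Set.Iio T)) (nhds 0)) ∧
      Filter.Tendsto (fun t => (u₁ t) ^ 2 / (2 * ab * (T - t)))
        (nhdsWithin T (Set.Iio T)) (nhds 1) ∧
      ∃ A > 0, ∀ t ∈ Set.Ico (0 : ℝ) T,
        (1 / (A * Real.sqrt (2 * ab * T))) *
            Real.exp (ab * (-(1 / ab) *
              Real.log (Real.sqrt (2 * ab * (T - t)) / Real.sqrt (2 * ab * T))))
          ≤ u₂ t / Real.sqrt (2 * ab * (T - t)) := by
  obtain ⟨hS, -⟩ := h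
  set I : Set ℝ := Set.Ico (0 : ℝ) T with hI
  have hab_pos : 0 < ab := by rw [hab]; linarith
  have hu1 : ∀ t ∈ I, 0 < u₁ t := fun t ht => (hS.pos t ht).1
  have hu2 : ∀ t ∈ I, 0 < u₂ t := fun t ht => (hS.pos t ht).2
  have h0I : (0 : ℝ) ∈ I := ⟨le_refl _, hT⟩
  have hc₀ : 0 < u₂ 0 - u₁ 0 := by linarith
  have hcont1 : ContinuousOn u₁ I := fun t ht =>
    (hS.ode1 t ht).continuousAt.continuousWithinAt
  have hcont2 : ContinuousOn u₂ I := fun t ht =>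
    (hS.ode2 t ht).continuousAt.continuousWithinAt
  -- derivative of the difference
  have hdf : ∀ t ∈ I, HasDerivAt (fun s => u₂ s - u₁ s)
      ((χ / 2 - 1) * 3 * (1 / u₁ t - 1 / u₂ t)) t := by
    intro t ht
    have := (hS.ode2 t ht).fun_sub (hS.ode1 t ht)
    exact this.congr_deriv (by ring)
  have hcontf : ContinuousOn (fun s => u₂ s - u₁ s) I := hcont2.sub hcont1
  -- u₁ < u₂ on I
  have hlt : ∀ t ∈ I, u₁ t < u₂ t := by
    by_contra hcon
    push_neg at hcon
    obtain ⟨tw, htwI, htw⟩ := hcon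
    set S : Set ℝ := {t | t ∈ I ∧ u₂ t ≤ u₁ t} with hSdef
    have hSne : S.Nonempty := ⟨tw, htwI, htw⟩
    have hSbdd : BddBelow S := ⟨0, fun s hs => hs.1.1⟩
    set t₀ : ℝ := sInf S with ht₀def
    have ht₀0 : 0 ≤ t₀ := le_csInf hSne fun s hs => hs.1.1
    have ht₀T : t₀ < T := lt_of_le_of_lt (csInf_le hSbdd ⟨htwI, htw⟩) htwI.2
    have ht₀I : t₀ ∈ I := ⟨ht₀0, ht₀T⟩
    have hft₀ : u₂ t₀ - u₁ t₀ ≤ 0 := by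
      obtain ⟨x, hxS, hx⟩ := mem_closure_iff_seq_limit.mp (csInf_mem_closure hSne hSbdd)
      have hc : ContinuousAt (fun s => u₂ s - u₁ s) t₀ :=
        ((hS.ode2 t₀ ht₀I).continuousAt).sub ((hS.ode1 t₀ ht₀I).continuousAt)
      have htend : Tendsto (fun n => u₂ (x n) - u₁ (x n)) atTop (nhds (u₂ t₀ - u₁ t₀)) :=
        (hc.tendsto).comp hx
      exact le_of_tendsto htend (Eventually.of_forall fun n => sub_nonpos.2 (hxS n).2)
    have ht₀pos : 0 < t₀ := by
      rcases lt_or_eq_of_le ht₀0 with h' | h'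
      · exact h'
      · exfalso; rw [← h'] at hft₀; linarith
    have hfpos : ∀ s ∈ Set.Ico (0 : ℝ) t₀, 0 < u₂ s - u₁ s := by
      intro s hs
      by_contra hns
      push_neg at hns
      have hsS : s ∈ S := ⟨⟨hs.1, lt_trans hs.2 ht₀T⟩, by linarith⟩
      exact absurd (csInf_le hSbdd hsS) (not_le.2 hs.2)
    have hsub : Set.Icc (0 : ℝ) t₀ ⊆ I := fun s hs => ⟨hs.1, lt_of_le_of_lt hs.2 ht₀T⟩
    have hsm : StrictMonoOn (fun s => u₂ s - u₁ s) (Set.Icc 0 t₀) := by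
      apply strictMonoOn_of_deriv_pos (convex_Icc _ _) (hcontf.mono hsub)
      intro x hx
      rw [interior_Icc] at hx
      have hxI : x ∈ I := hsub ⟨hx.1.le, hx.2.le⟩
      rw [(hdf x hxI).deriv]
      have hxlt : u₁ x < u₂ x := by
        have := hfpos x ⟨hx.1.le, hx.2⟩; linarith
      have : 1 / u₂ x < 1 / u₁ x :=
        one_div_lt_one_div_of_lt (hu1 x hxI) hxlt
      have h1 : 0 < χ / 2 - 1 := by linarith
      nlinarith
    have := hsm ⟨le_refl _, ht₀pos.le⟩ ⟨ht₀pos.le, le_refl _⟩ ht₀pos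
    simp only at this
    linarith
  -- (i) monotone
  have hmono : MonotoneOn (fun t => u₂ t - u₁ t) I := by
    apply StrictMonoOn.monotoneOn
    apply strictMonoOn_of_deriv_pos (convex_Ico _ _) hcontf
    intro x hx
    rw [interior_Ico] at hx
    have hxI : x ∈ I := ⟨hx.1.le, hx.2⟩
    rw [(hdf x hxI).deriv]
    have : 1 / u₂ x < 1 / u₁ x := one_div_lt_one_div_of_lt (hu1 x hxI) (hlt x hxI)
    have h1 : 0 < χ / 2 - 1 := by linarith
    nlinarith
  have hlb : ∀ t ∈ I, u₂ 0 - u₁ 0 ≤ u₂ t := by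
    intro t ht
    have h1 := hmono h0I ht ht.1
    have h2 := hu1 t ht
    simp only at h1
    linarith
  -- derivative of u₁²
  have hda : ∀ t ∈ I, HasDerivAt (fun s => (u₁ s) ^ 2)
      (2 * u₁ t * (2 / u₁ t - 1 / u₂ t -
        (χ / 2) * (2 / u₁ t - 1 / u₂ t + 1 / (u₁ t + u₂ t)))) t := by
    intro t ht
    have := (hS.ode1 t ht).fun_pow 2
    exact this.congr_deriv (by push_cast; ring)
  have hform : ∀ t ∈ I, 2 * u₁ t * (2 / u₁ t - 1 / u₂ t -
        (χ / 2) * (2 / u₁ t - 1 / u₂ t + 1 / (u₁ t + u₂ t)))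
      = (4 - 2 * χ) + (χ - 2) * (u₁ t / u₂ t) - χ * (u₁ t / (u₁ t + u₂ t)) := by
    intro t ht
    have ha := hu1 t ht
    have hb := hu2 t ht
    have hab' : u₁ t + u₂ t ≠ 0 := by positivity
    field_simp
    ring
  have hderiv_le : ∀ t ∈ I, deriv (fun s => (u₁ s) ^ 2) t ≤ -ab := by
    intro t ht
    rw [(hda t ht).deriv, hform t ht, hab]
    have ha := hu1 t ht
    have hb := hu2 t ht
    have h1 : u₁ t / u₂ t ≤ 1 := (div_le_one hb).2 (hlt t ht).le
    have h2 : 0 ≤ u₁ t / (u₁ t + u₂ t) := by positivity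
    have h3 : (χ - 2) * (u₁ t / u₂ t) ≤ χ - 2 := by nlinarith
    nlinarith
  -- u₁² is antitone on I
  have hcontsq : ContinuousOn (fun s => (u₁ s) ^ 2) I := hcont1.pow 2
  have hanti : AntitoneOn (fun s => (u₁ s) ^ 2) I := by
    apply antitoneOn_of_deriv_nonpos (convex_Ico _ _) hcontsq
    · intro x hx
      rw [interior_Ico] at hx
      exact ((hda x ⟨hx.1.le, hx.2⟩).differentiableAt).differentiableWithinAt
    · intro x hx
      rw [interior_Ico] at hx
      have := hderiv_le x ⟨hx.1.le, hx.2⟩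
      linarith
  have hTmem : ∀ {a : ℝ}, a < T → Set.Ioo a T ∈ nhdsWithin T (Set.Iio T) :=
    fun {a} ha => Ioo_mem_nhdsLT_of_mem ⟨ha, le_refl _⟩
  have hIooI : ∀ {a : ℝ}, 0 ≤ a → Set.Ioo a T ⊆ I :=
    fun {a} ha s hs => ⟨le_trans ha hs.1.le, hs.2⟩
  -- u₁ → 0
  have hlim : Tendsto u₁ (nhdsWithin T (Set.Iio T)) (nhds 0) := by
    rw [NormedAddCommGroup.tendsto_nhds_zero]
    intro ε hε
    have hbddabove : IsBoundedUnder (· ≤ ·) (nhdsWithin T (Set.Iio T)) u₁ := by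
      refine ⟨u₁ 0, ?_⟩
      rw [eventually_map]
      filter_upwards [hTmem hT] with x hx
      have hxI : x ∈ I := hIooI le_rfl hx
      have hsq : (u₁ x) ^ 2 ≤ (u₁ 0) ^ 2 := hanti h0I hxI hxI.1
      have := hu1 x hxI
      nlinarith [hu1 0 h0I]
    have hfreq : ∃ᶠ x in nhdsWithin T (Set.Iio T), u₁ x < ε := by
      apply frequently_lt_of_liminf_lt hbddabove.isCoboundedUnder_ge
      rw [hbu]; exact hε
    have hevmem : ∀ᶠ x in nhdsWithin T (Set.Iio T), x ∈ Set.Ioo 0 T :=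
      eventually_mem_set.2 (hTmem hT)
    obtain ⟨s, hsε, hs⟩ := (hfreq.and_eventually hevmem).exists
    have hsI : s ∈ I := hIooI le_rfl hs
    filter_upwards [hTmem hs.2] with x hx
    have hxI : x ∈ I := hIooI hsI.1 hx
    have hsq : (u₁ x) ^ 2 ≤ (u₁ s) ^ 2 := hanti hsI hxI hx.1.le
    have hx1 := hu1 x hxI
    have hs1 := hu1 s hsI
    rw [Real.norm_eq_abs, abs_of_pos hx1]
    nlinarith
  -- quantitative two-sided bounds near T
  have hmain : ∀ ε > (0:ℝ), ∃ t₁, t₁ ∈ I ∧ ∀ s ∈ Set.Ico t₁ T,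
      (2 * ab - ε) * (T - s) ≤ (u₁ s) ^ 2 ∧ (u₁ s) ^ 2 ≤ (2 * ab + ε) * (T - s) := by
    intro ε hε
    have hχab : 0 < χ + ab := by linarith
    set δ : ℝ := ε * (u₂ 0 - u₁ 0) / (χ + ab) with hδ
    have hδpos : 0 < δ := by positivity
    have hev : ∀ᶠ x in nhdsWithin T (Set.Iio T), u₁ x < δ := by
      have h' := hlim
      rw [NormedAddCommGroup.tendsto_nhds_zero] at h'
      have hevmem2 : ∀ᶠ x in nhdsWithin T (Set.Iio T), x ∈ Set.Ioo 0 T :=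
        eventually_mem_set.2 (hTmem hT)
      filter_upwards [h' δ hδpos, hevmem2] with x hx hx'
      have := hu1 x (hIooI le_rfl hx')
      rw [Real.norm_eq_abs, abs_of_pos this] at hx
      exact hx
    obtain ⟨l, hlT, hl⟩ := mem_nhdsLT_iff_exists_Ioo_subset.mp hev
    set t₁ : ℝ := max ((l + T) / 2) 0 with ht₁def
    have hlT' : l < T := hlT
    have ht₁l : l < t₁ := lt_of_lt_of_le (by linarith) (le_max_left _ _)
    have ht₁T : t₁ < T := by
      rw [ht₁def, max_lt_iff]
      exact ⟨by linarith, hT⟩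
    have ht₁I : t₁ ∈ I := ⟨le_max_right _ _, ht₁T⟩
    refine ⟨t₁, ht₁I, ?_⟩
    have hsubI : Set.Ico t₁ T ⊆ I := fun s hs => ⟨le_trans ht₁I.1 hs.1, hs.2⟩
    have hsmall : ∀ x ∈ Set.Ico t₁ T, u₁ x < δ := fun x hx =>
      hl ⟨lt_of_lt_of_le ht₁l hx.1, hx.2⟩
    have hδc : δ / (u₂ 0 - u₁ 0) = ε / (χ + ab) := by
      rw [hδ]; field_simp
    have hdbound : ∀ x ∈ Set.Ico t₁ T,
        -(2 * ab) - ε ≤ deriv (fun s => (u₁ s) ^ 2) x ∧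
        deriv (fun s => (u₁ s) ^ 2) x ≤ -(2 * ab) + ε := by
      intro x hx
      have hxI : x ∈ I := hsubI hx
      rw [(hda x hxI).deriv, hform x hxI]
      have ha := hu1 x hxI
      have hb := hu2 x hxI
      have hcb : u₂ 0 - u₁ 0 ≤ u₂ x := hlb x hxI
      have hxδ : u₁ x < δ := hsmall x hx
      have hq0 : u₁ x / (u₂ 0 - u₁ 0) ≤ ε / (χ + ab) := by
        rw [← hδc]
        exact div_le_div_of_nonneg_right hxδ.le hc₀.le
      have hq1 : u₁ x / u₂ x ≤ ε / (χ + ab) :=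
        le_trans (div_le_div_of_nonneg_left ha.le hc₀ hcb) hq0
      have hq2 : u₁ x / (u₁ x + u₂ x) ≤ ε / (χ + ab) := by
        refine le_trans (le_trans (div_le_div_of_nonneg_left ha.le hb ?_) ?_) hq0
        · linarith
        · exact div_le_div_of_nonneg_left ha.le hc₀ hcb
      have hq1' : 0 ≤ u₁ x / u₂ x := by positivity
      have hq2' : 0 ≤ u₁ x / (u₁ x + u₂ x) := by positivity
      have hub1 : (χ - 2) * (u₁ x / u₂ x) ≤ ε := by
        calc (χ - 2) * (u₁ x / u₂ x) ≤ (χ + ab) * (ε / (χ + ab)) := by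
              apply mul_le_mul (by linarith) hq1 hq1' (by linarith)
          _ = ε := by field_simp
      have hub2 : χ * (u₁ x / (u₁ x + u₂ x)) ≤ ε := by
        calc χ * (u₁ x / (u₁ x + u₂ x)) ≤ (χ + ab) * (ε / (χ + ab)) := by
              apply mul_le_mul (by linarith) hq2 hq2' (by linarith)
          _ = ε := by field_simp
      constructor
      · rw [hab]
        have : 0 ≤ (χ - 2) * (u₁ x / u₂ x) := mul_nonneg (by linarith) hq1'
        linarith
      · rw [hab]
        have : 0 ≤ χ * (u₁ x / (u₁ x + u₂ x)) := mul_nonneg (by linarith) hq2'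
        linarith
    -- comparison functions
    intro s hs
    have hsI : s ∈ I := hsubI hs
    have hdplus : ∀ x ∈ I, HasDerivAt (fun r => (u₁ r) ^ 2 + (2 * ab + ε) * r)
        (deriv (fun r => (u₁ r) ^ 2) x + (2 * ab + ε)) x := by
      intro x hx
      have h1 := (hda x hx)
      have h2 : HasDerivAt (fun r : ℝ => (2 * ab + ε) * r) (2 * ab + ε) x := by
        simpa using (hasDerivAt_id x).const_mul (2 * ab + ε)
      have := h1.add h2
      rwa [(hda x hx).deriv]
    have hdminus : ∀ x ∈ I, HasDerivAt (fun r => (u₁ r) ^ 2 + (2 * ab - ε) * r)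
        (deriv (fun r => (u₁ r) ^ 2) x + (2 * ab - ε)) x := by
      intro x hx
      have h1 := (hda x hx)
      have h2 : HasDerivAt (fun r : ℝ => (2 * ab - ε) * r) (2 * ab - ε) x := by
        simpa using (hasDerivAt_id x).const_mul (2 * ab - ε)
      have := h1.add h2
      rwa [(hda x hx).deriv]
    have hcsub : ContinuousOn (fun r => (u₁ r) ^ 2) (Set.Ico t₁ T) := hcontsq.mono hsubI
    have hmonoP : MonotoneOn (fun r => (u₁ r) ^ 2 + (2 * ab + ε) * r) (Set.Ico t₁ T) := by
      apply monotoneOn_of_deriv_nonneg (convex_Ico _ _)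
        (fun x hx => ((hdplus x (hsubI hx)).differentiableAt.continuousAt).continuousWithinAt)
      · intro x hx
        rw [interior_Ico] at hx
        have hxJ : x ∈ Set.Ico t₁ T := ⟨hx.1.le, hx.2⟩
        exact ((hdplus x (hsubI hxJ)).differentiableAt).differentiableWithinAt
      · intro x hx
        rw [interior_Ico] at hx
        have hxJ : x ∈ Set.Ico t₁ T := ⟨hx.1.le, hx.2⟩
        rw [(hdplus x (hsubI hxJ)).deriv]
        have := (hdbound x hxJ).1
        linarith
    have hantiM : AntitoneOn (fun r => (u₁ r) ^ 2 + (2 * ab - ε) * r) (Set.Ico t₁ T) := by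
      apply antitoneOn_of_deriv_nonpos (convex_Ico _ _)
        (fun x hx => ((hdminus x (hsubI hx)).differentiableAt.continuousAt).continuousWithinAt)
      · intro x hx
        rw [interior_Ico] at hx
        have hxJ : x ∈ Set.Ico t₁ T := ⟨hx.1.le, hx.2⟩
        exact ((hdminus x (hsubI hxJ)).differentiableAt).differentiableWithinAt
      · intro x hx
        rw [interior_Ico] at hx
        have hxJ : x ∈ Set.Ico t₁ T := ⟨hx.1.le, hx.2⟩
        rw [(hdminus x (hsubI hxJ)).deriv]
        have := (hdbound x hxJ).2
        linarith
    have hidT : Tendsto (fun t : ℝ => t) (nhdsWithin T (Set.Iio T)) (nhds T) :=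
      tendsto_id.mono_right nhdsWithin_le_nhds
    have hsqT : Tendsto (fun t => (u₁ t) ^ 2) (nhdsWithin T (Set.Iio T)) (nhds 0) := by
      have := hlim.pow 2
      simpa using this
    constructor
    · -- lower bound via antitone comparison
      have htendm : Tendsto (fun t => (u₁ t) ^ 2 + (2 * ab - ε) * t)
          (nhdsWithin T (Set.Iio T)) (nhds (0 + (2 * ab - ε) * T)) :=
        hsqT.add (hidT.const_mul _)
      have hle : 0 + (2 * ab - ε) * T ≤ (u₁ s) ^ 2 + (2 * ab - ε) * s := by
        apply le_of_tendsto htendm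
        filter_upwards [hTmem hs.2] with t ht
        exact hantiM hs ⟨le_trans hs.1 ht.1.le, ht.2⟩ ht.1.le
      nlinarith [hle]
    · -- upper bound via monotone comparison
      have htendp : Tendsto (fun t => (u₁ t) ^ 2 + (2 * ab + ε) * t)
          (nhdsWithin T (Set.Iio T)) (nhds (0 + (2 * ab + ε) * T)) :=
        hsqT.add (hidT.const_mul _)
      have hle : (u₁ s) ^ 2 + (2 * ab + ε) * s ≤ 0 + (2 * ab + ε) * T := by
        apply ge_of_tendsto htendp
        filter_upwards [hTmem hs.2] with t ht
        exact hmonoP hs ⟨le_trans hs.1 ht.1.le, ht.2⟩ ht.1.le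
      nlinarith [hle]
  -- the ratio tendsto
  have hratio : Tendsto (fun t => (u₁ t) ^ 2 / (2 * ab * (T - t)))
      (nhdsWithin T (Set.Iio T)) (nhds 1) := by
    rw [Metric.tendsto_nhds]
    intro δ hδ
    obtain ⟨t₁, ht₁I, hbnd⟩ := hmain (ab * δ) (by positivity)
    filter_upwards [hTmem ht₁I.2] with x hx
    have hxJ : x ∈ Set.Ico t₁ T := ⟨hx.1.le, hx.2⟩
    obtain ⟨hlo, hhi⟩ := hbnd x hxJ
    have hpos : 0 < 2 * ab * (T - x) := by
      have : 0 < T - x := by linarith [hx.2]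
      positivity
    rw [Real.dist_eq, abs_sub_lt_iff]
    have hup : (u₁ x) ^ 2 / (2 * ab * (T - x)) ≤ 1 + δ / 2 := by
      rw [div_le_iff₀ hpos]
      calc (u₁ x) ^ 2 ≤ (2 * ab + ab * δ) * (T - x) := hhi
        _ = (1 + δ / 2) * (2 * ab * (T - x)) := by ring
    have hdn : 1 - δ / 2 ≤ (u₁ x) ^ 2 / (2 * ab * (T - x)) := by
      rw [le_div_iff₀ hpos]
      calc (1 - δ / 2) * (2 * ab * (T - x)) = (2 * ab - ab * δ) * (T - x) := by ring
        _ ≤ (u₁ x) ^ 2 := hlo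
    constructor <;> linarith
  refine ⟨⟨hmono, hlb⟩, ⟨hderiv_le, hlim⟩, hratio, ?_⟩
  -- part (iv)
  refine ⟨1 / (u₂ 0 - u₁ 0), by positivity, ?_⟩
  intro t ht
  set A : ℝ := 1 / (u₂ 0 - u₁ 0) with hA
  have hApos : 0 < A := by positivity
  have hTt : 0 < T - t := by linarith [ht.2]
  have hxpos : 0 < Real.sqrt (2 * ab * (T - t)) := Real.sqrt_pos.2 (by positivity)
  have hypos : 0 < Real.sqrt (2 * ab * T) := Real.sqrt_pos.2 (by positivity)
  have hexp : Real.exp (ab * (-(1 / ab) *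
      Real.log (Real.sqrt (2 * ab * (T - t)) / Real.sqrt (2 * ab * T))))
      = Real.sqrt (2 * ab * T) / Real.sqrt (2 * ab * (T - t)) := by
    have h1 : ab * (-(1 / ab) *
        Real.log (Real.sqrt (2 * ab * (T - t)) / Real.sqrt (2 * ab * T)))
        = -Real.log (Real.sqrt (2 * ab * (T - t)) / Real.sqrt (2 * ab * T)) := by
      exact stmt19_aux1 _ _ (ne_of_gt hab_pos)
    rw [h1, Real.exp_neg, Real.exp_log (div_pos hxpos hypos), inv_div]
  rw [hexp]
  have hrw : 1 / (A * Real.sqrt (2 * ab * T)) *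
      (Real.sqrt (2 * ab * T) / Real.sqrt (2 * ab * (T - t)))
      = (u₂ 0 - u₁ 0) / Real.sqrt (2 * ab * (T - t)) := by
    rw [hA]
    exact stmt19_aux2 _ _ _ (ne_of_gt hc₀) (ne_of_gt hypos) (ne_of_gt hxpos)
  rw [hrw]
  exact div_le_div_of_nonneg_right (hlb t ht) hxpos.le
end
end
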